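/- arXiv:2403.00445 — 8 statements merged into one kernel-verified Lean document; each statement's English description precedes it below -/
import Mathlib

section
/- A triangulation T of a finite point set X in the plane is Delaunay (every triangle has an empty open circumdisc with respect to X) if and only if for every triangle of T, no vertex of any adjacent triangle lies in the open circumdisc of that triangle. -/
noncomputable section

abbrev Pt := EuclideanSpace ℝ (Fin 2)

instance : DecidableEq Pt := Classical.decEq _

open RealInnerProductSpace

-- coordinates of inner product
example (u z : Pt) : ⟪u, z⟫ = u 0 * z 0 + u 1 * z 1 := by
  simp [PiLp.inner_apply, Fin.sum_univ_two, RCLike.inner_apply, conj_trivial]; ring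

lemma dist_sq_expand (p c : Pt) : dist p c ^ 2 = ‖p‖^2 - 2 * ⟪p, c⟫ + ‖c‖^2 := by
  rw [dist_eq_norm, norm_sub_sq_real]

lemma collinear_of_inner_eq {a b c z : Pt} (hz : z ≠ 0)
    (h1 : ⟪b - a, z⟫ = 0) (h2 : ⟪c - a, z⟫ = 0) : Collinear ℝ ({a, b, c} : Set Pt) := by
  classical
  set v : Pt := WithLp.toLp 2 ![-(z 1), z 0] with hv
  have hvz : v 0 = -(z 1) ∧ v 1 = z 0 := by constructor <;> rfl
  have hzsum : z 0 ^ 2 + z 1 ^ 2 ≠ 0 := by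
    intro h
    apply hz
    have h0 : z 0 = 0 := by nlinarith [sq_nonneg (z 0), sq_nonneg (z 1)]
    have h1' : z 1 = 0 := by nlinarith [sq_nonneg (z 0), sq_nonneg (z 1)]
    ext i; fin_cases i <;> simpa [h0, h1']
  rw [collinear_iff_of_mem (Set.mem_insert a _)]
  refine ⟨v, ?_⟩
  intro p hp
  have key : ∀ u : Pt, ⟪u, z⟫ = 0 → ∃ r : ℝ, u = r • v := by
    intro u hu
    have hu' : u 0 * z 0 + u 1 * z 1 = 0 := by
      simp [PiLp.inner_apply, Fin.sum_univ_two, RCLike.inner_apply, conj_trivial] at hu; linarith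
    refine ⟨(u 0 * v 0 + u 1 * v 1) / (z 0 ^ 2 + z 1 ^ 2), ?_⟩
    have hsm : ∀ (r : ℝ) (w : Pt) (i : Fin 2), (r • w) i = r * w i := fun r w i => rfl
    ext i
    rw [hsm]
    fin_cases i <;>
      simp only [hv, PiLp.toLp_apply, Fin.zero_eta, Fin.mk_one, Matrix.cons_val_zero, Matrix.cons_val_one, Matrix.head_cons,
        Matrix.cons_val_fin_one] <;>
      field_simp
    · linear_combination z 0 * hu'
    · linear_combination z 1 * hu'
  rcases hp with rfl | rfl | rfl
  · exact ⟨0, by simp⟩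
  · obtain ⟨r, hr⟩ := key (p - a) h1
    exact ⟨r, by rw [← hr]; abel_nf; simp⟩
  · obtain ⟨r, hr⟩ := key (p - a) h2
    exact ⟨r, by rw [← hr]; abel_nf; simp⟩

lemma circum_unique {a b c : Pt} (hncol : ¬ Collinear ℝ ({a, b, c} : Set Pt))
    {c₁ c₂ : Pt} {r₁ r₂ : ℝ}
    (ha₁ : dist a c₁ = r₁) (hb₁ : dist b c₁ = r₁) (hc₁ : dist c c₁ = r₁)
    (ha₂ : dist a c₂ = r₂) (hb₂ : dist b c₂ = r₂) (hc₂ : dist c c₂ = r₂) :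
    c₁ = c₂ ∧ r₁ = r₂ := by
  have key : ∀ p q : Pt, ∀ z : Pt, ∀ r : ℝ, dist p z = r → dist q z = r →
      2 * ⟪q - p, z⟫ = ‖q‖^2 - ‖p‖^2 := by
    intro p q z r hp hq
    have h1 : dist p z ^ 2 = dist q z ^ 2 := by rw [hp, hq]
    rw [dist_sq_expand, dist_sq_expand] at h1
    have : ⟪q - p, z⟫ = ⟪q, z⟫ - ⟪p, z⟫ := inner_sub_left q p z
    linarith
  have hcc : c₁ = c₂ := by
    by_contra hne
    have hz : c₁ - c₂ ≠ 0 := sub_ne_zero.mpr hne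
    have e1 : ⟪b - a, c₁ - c₂⟫ = 0 := by
      have i1 := key a b c₁ r₁ ha₁ hb₁
      have i2 := key a b c₂ r₂ ha₂ hb₂
      have : ⟪b - a, c₁ - c₂⟫ = ⟪b - a, c₁⟫ - ⟪b - a, c₂⟫ := inner_sub_right _ _ _
      linarith
    have e2 : ⟪c - a, c₁ - c₂⟫ = 0 := by
      have i1 := key a c c₁ r₁ ha₁ hc₁
      have i2 := key a c c₂ r₂ ha₂ hc₂
      have : ⟪c - a, c₁ - c₂⟫ = ⟪c - a, c₁⟫ - ⟪c - a, c₂⟫ := inner_sub_right _ _ _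
      linarith
    exact hncol (collinear_of_inner_eq hz e1 e2)
  refine ⟨hcc, ?_⟩
  rw [← ha₁, ← ha₂, hcc]

lemma circum_exists {a b c : Pt} (hncol : ¬ Collinear ℝ ({a, b, c} : Set Pt)) :
    ∃ (z : Pt) (r : ℝ), dist a z = r ∧ dist b z = r ∧ dist c z = r := by
  have hindep : AffineIndependent ℝ ![a, b, c] :=
    affineIndependent_iff_not_collinear_set.mpr hncol
  let S : Affine.Simplex ℝ Pt 2 := ⟨![a, b, c], hindep⟩
  refine ⟨S.circumcenter, S.circumradius, ?_, ?_, ?_⟩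
  · exact S.dist_circumcenter_eq_circumradius 0
  · exact S.dist_circumcenter_eq_circumradius 1
  · exact S.dist_circumcenter_eq_circumradius 2

/-- `X` is in general position: no three points collinear and no four points cocircular. -/
def GenPos (X : Finset Pt) : Prop :=
  (∀ s : Finset Pt, s ⊆ X → s.card = 3 → ¬ Collinear ℝ (s : Set Pt)) ∧
  (∀ s : Finset Pt, s ⊆ X → s.card = 4 → ¬ ∃ (c : Pt) (r : ℝ), ∀ p ∈ s, dist p c = r)

/-- `T` is a triangulation of the finite planar point set `X`: a two-dimensional geometric
simplicial complex whose vertex set is `X` and whose underlying space is the convex hull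
of `X`. -/
structure IsTriangulation (X : Finset Pt) (T : Finset (Finset Pt)) : Prop where
  card : ∀ t ∈ T, t.card = 3
  verts : (⋃ t ∈ T, (t : Set Pt)) = (X : Set Pt)
  cover : (⋃ t ∈ T, convexHull ℝ (t : Set Pt)) = convexHull ℝ (X : Set Pt)
  inter : ∀ t ∈ T, ∀ t' ∈ T,
    convexHull ℝ (t : Set Pt) ∩ convexHull ℝ (t' : Set Pt)
      = convexHull ℝ ((t ∩ t' : Finset Pt) : Set Pt)

lemma tri_subset_X {X : Finset Pt} {T : Finset (Finset Pt)} (hT : IsTriangulation X T)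
    {t : Finset Pt} (ht : t ∈ T) : t ⊆ X := by
  intro v hv
  have : (v : Pt) ∈ (⋃ t ∈ T, (t : Set Pt)) := Set.mem_biUnion ht hv
  rw [hT.verts] at this
  exact_mod_cast this

lemma exists_tri_of_mem {X : Finset Pt} {T : Finset (Finset Pt)} (hT : IsTriangulation X T)
    {x : Pt} (hx : x ∈ X) : ∃ w ∈ T, x ∈ w := by
  have : (x : Pt) ∈ (⋃ t ∈ T, (t : Set Pt)) := by rw [hT.verts]; exact_mod_cast hx
  obtain ⟨w, hw, hxw⟩ := Set.mem_iUnion₂.mp this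
  exact ⟨w, hw, by exact_mod_cast hxw⟩

/-- If `x ∈ X` lies in the convex hull of a triangle `u ∈ T`, then `x` is a vertex of `u`. -/
lemma mem_of_mem_convexHull {X : Finset Pt} {T : Finset (Finset Pt)}
    (hX : GenPos X) (hT : IsTriangulation X T) {u : Finset Pt} (hu : u ∈ T)
    {x : Pt} (hx : x ∈ X) (hmem : x ∈ convexHull ℝ (u : Set Pt)) : x ∈ u := by
  obtain ⟨w, hw, hxw⟩ := exists_tri_of_mem hT hx
  have hxw' : x ∈ convexHull ℝ (w : Set Pt) := subset_convexHull ℝ _ (by exact_mod_cast hxw)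
  have hxi : x ∈ convexHull ℝ ((u ∩ w : Finset Pt) : Set Pt) := by
    rw [← hT.inter u hu w hw]; exact ⟨hmem, hxw'⟩
  have hsub : u ∩ w ⊆ u := Finset.inter_subset_left
  have hcard : (u ∩ w).card ≤ 3 := le_trans (Finset.card_le_card hsub) (le_of_eq (hT.card u hu))
  interval_cases h : (u ∩ w).card
  · rw [Finset.card_eq_zero.mp h] at hxi
    simp at hxi
  · obtain ⟨p, hp⟩ := Finset.card_eq_one.mp h
    rw [hp] at hxi
    simp only [Finset.coe_singleton, convexHull_singleton, Set.mem_singleton_iff] at hxi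
    rw [hxi]
    exact hsub (hp ▸ Finset.mem_singleton_self p)
  · obtain ⟨p, q, hpq, hpqeq⟩ := Finset.card_eq_two.mp h
    rw [hpqeq] at hxi
    have : x ∈ segment ℝ p q := by
      rw [← convexHull_pair]
      simpa using hxi
    by_cases hxp : x = p
    · exact hsub (hpqeq ▸ (by simp [hxp]))
    by_cases hxq : x = q
    · exact hsub (hpqeq ▸ (by simp [hxq]))
    · exfalso
      have hcol : Collinear ℝ ({x, p, q} : Set Pt) := by
        apply collinear_insert_of_mem_affineSpan_pair
        exact (convexHull_subset_affineSpan _) (by rw [convexHull_pair]; exact this)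
      have hpu : p ∈ u := hsub (hpqeq ▸ (by simp))
      have hqu : q ∈ u := hsub (hpqeq ▸ (by simp))
      have hXs : ({x, p, q} : Finset Pt) ⊆ X := by
        intro v hv
        simp only [Finset.mem_insert, Finset.mem_singleton] at hv
        rcases hv with rfl | rfl | rfl
        · exact hx
        · exact tri_subset_X hT hu hpu
        · exact tri_subset_X hT hu hqu
      have hc3 : ({x, p, q} : Finset Pt).card = 3 := by
        rw [Finset.card_insert_of_notMem (by simp [hxp, hxq]),
          Finset.card_insert_of_notMem (by simp [hpq])]
        rfl
      exact hX.1 _ hXs hc3 (by simpa using hcol)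
  · have : u ∩ w = u := Finset.eq_of_subset_of_card_le hsub (by rw [h, hT.card u hu])
    have huw : u ⊆ w := by rw [← this]; exact Finset.inter_subset_right
    have : u = w := Finset.eq_of_subset_of_card_le huw
      (by rw [hT.card u hu, hT.card w hw])
    rw [this]; exact hxw

lemma not_subset_biUnion {ι : Type*} (s : Finset ι) (L : ι → Set Pt) :
    ∀ (U : Set Pt), IsOpen U → U.Nonempty →
    (∀ q ∈ s, IsClosed (L q)) → (∀ q ∈ s, interior (L q) = ∅) →
    ¬ U ⊆ ⋃ q ∈ s, L q := by
  classical
  induction s using Finset.induction_on with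
  | empty => intro U _ hne _ _ hsub
             obtain ⟨p, hp⟩ := hne
             simpa using hsub hp
  | insert a s hnotmem ih =>
      intro U hU hne hcl hint hsub
      by_cases h : (U \ L a).Nonempty
      · refine ih (U \ L a) (IsOpen.sdiff hU (hcl a (by simp))) h
          (fun q hq => hcl q (by simp [hq])) (fun q hq => hint q (by simp [hq])) ?_
        intro p hp
        have := hsub hp.1
        simp only [Finset.mem_insert, Set.mem_iUnion] at this ⊢
        obtain ⟨q, hq1 | hq1, hq2⟩ := this
        · exact absurd (hq1 ▸ hq2) hp.2
        · exact ⟨q, hq1, hq2⟩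
      · have hsub' : U ⊆ L a := by
          intro p hp
          by_contra hpl
          exact h ⟨p, hp, hpl⟩
        have : U ⊆ interior (L a) := by
          intro p hp
          exact interior_maximal hsub' hU hp
        rw [hint a (by simp)] at this
        obtain ⟨p, hp⟩ := hne
        exact this hp

lemma line_interior_empty {x q a b c : Pt}
    (hncol : ¬ Collinear ℝ ({a, b, c} : Set Pt)) :
    interior ((line[ℝ, x, q] : AffineSubspace ℝ Pt) : Set Pt) = ∅ := by
  by_contra h
  have hne : (interior ((line[ℝ, x, q] : AffineSubspace ℝ Pt) : Set Pt)).Nonempty :=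
    Set.nonempty_iff_ne_empty.mpr h
  have hcv : convexHull ℝ ((line[ℝ, x, q] : AffineSubspace ℝ Pt) : Set Pt)
      = ((line[ℝ, x, q] : AffineSubspace ℝ Pt) : Set Pt) :=
    (AffineSubspace.convex _).convexHull_eq
  have htop : affineSpan ℝ ((line[ℝ, x, q] : AffineSubspace ℝ Pt) : Set Pt) = ⊤ := by
    rw [← interior_convexHull_nonempty_iff_affineSpan_eq_top]
    rwa [hcv]
  rw [AffineSubspace.affineSpan_coe] at htop
  have hmem : ∀ p : Pt, p ∈ line[ℝ, x, q] := by
    intro p; rw [htop]; trivial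
  exact hncol (collinear_triple_of_mem_affineSpan_pair (hmem a) (hmem b) (hmem c))

lemma interior_tri_nonempty {a b c : Pt} (hncol : ¬ Collinear ℝ ({a, b, c} : Set Pt)) :
    (interior (convexHull ℝ ({a, b, c} : Set Pt))).Nonempty := by
  have hindep : AffineIndependent ℝ ![a, b, c] :=
    affineIndependent_iff_not_collinear_set.mpr hncol
  rw [interior_convexHull_nonempty_iff_affineSpan_eq_top]
  have hr : Set.range ![a, b, c] = ({a, b, c} : Set Pt) := by
    simp only [Matrix.range_cons, Matrix.range_empty, Set.union_empty]
    ext p; simp [or_comm, or_left_comm]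
  rw [← hr]
  rw [hindep.affineSpan_eq_top_iff_card_eq_finrank_add_one]
  simp [finrank_euclideanSpace_fin]

/-- choose a point of the triangle interior avoiding all lines through `x` and points of `X`. -/
lemma exists_good_basepoint {X : Finset Pt} (x : Pt) {a b c : Pt}
    (hncol : ¬ Collinear ℝ ({a, b, c} : Set Pt)) :
    ∃ y, y ∈ interior (convexHull ℝ ({a, b, c} : Set Pt)) ∧
      ∀ q ∈ X, q ≠ x → y ∉ (line[ℝ, x, q] : AffineSubspace ℝ Pt) := by
  classical
  have hU := interior_tri_nonempty hncol
  have hnot := not_subset_biUnion (X.erase x)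
    (fun q => ((line[ℝ, x, q] : AffineSubspace ℝ Pt) : Set Pt))
    (interior (convexHull ℝ ({a, b, c} : Set Pt))) isOpen_interior hU
    (fun q _ => (line[ℝ, x, q] : AffineSubspace ℝ Pt).closed_of_finiteDimensional)
    (fun q _ => line_interior_empty hncol)
  rw [Set.not_subset] at hnot
  obtain ⟨y, hy1, hy2⟩ := hnot
  refine ⟨y, hy1, ?_⟩
  intro q hq hqx hyline
  exact hy2 (Set.mem_biUnion (Finset.mem_coe.mpr (Finset.mem_erase.mpr ⟨hqx, hq⟩)) hyline)

lemma edge_step {cu cv : Pt} {ru rv : ℝ} {a b d x y : Pt} {s₁ s₂ : ℝ}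
    (hau : dist a cu = ru) (hbu : dist b cu = ru)
    (hav : dist a cv = rv) (hbv : dist b cv = rv) (hdv : dist d cv = rv)
    (hdu : ru ≤ dist d cu) (hru : 0 ≤ ru)
    (hmid : (1-s₁)•y + s₁•x ∈ convexHull ℝ ({a, b} : Set Pt))
    (hnext : (1-s₂)•y + s₂•x ∈ convexHull ℝ ({a, b, d} : Set Pt))
    (hs : s₁ < s₂) (hs0 : 0 ≤ s₁) (hs2 : s₂ ≤ 1) :
    dist x cv^2 - rv^2 ≤ dist x cu^2 - ru^2 := by
  set w : Pt := cv - cu with hw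
  set K : ℝ := ‖cu‖^2 - ru^2 - ‖cv‖^2 + rv^2 with hK
  have hh : ∀ p : Pt, (dist p cu^2 - ru^2) - (dist p cv^2 - rv^2) = 2*⟪p, w⟫ + K := by
    intro p
    rw [hw, inner_sub_right, dist_sq_expand, dist_sq_expand, hK]
    ring
  have hlin : IsLinearMap ℝ (fun p : Pt => 2*⟪p, w⟫) :=
    ⟨fun p q => by rw [inner_add_left]; ring,
     fun r p => by rw [real_inner_smul_left, smul_eq_mul]; ring⟩
  have ha0 : 2*⟪a, w⟫ + K = 0 := by rw [← hh a, hau, hav]; ring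
  have hb0 : 2*⟪b, w⟫ + K = 0 := by rw [← hh b, hbu, hbv]; ring
  have hd0 : 0 ≤ 2*⟪d, w⟫ + K := by
    rw [← hh d, hdv]
    have : ru^2 ≤ dist d cu^2 := by nlinarith
    linarith
  have hge : convexHull ℝ ({a, b, d} : Set Pt) ⊆ {p : Pt | -K ≤ 2*⟪p, w⟫} := by
    apply convexHull_min _ (convex_halfSpace_ge hlin (-K))
    intro p hp
    rcases hp with rfl | rfl | rfl
    · simp only [Set.mem_setOf_eq]; linarith
    · simp only [Set.mem_setOf_eq]; linarith
    · simp only [Set.mem_setOf_eq]; linarith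
  have hle : convexHull ℝ ({a, b} : Set Pt) ⊆ {p : Pt | 2*⟪p, w⟫ ≤ -K} := by
    apply convexHull_min _ (convex_halfSpace_le hlin (-K))
    intro p hp
    rcases hp with rfl | rfl
    · simp only [Set.mem_setOf_eq]; linarith
    · simp only [Set.mem_setOf_eq]; linarith
  have hsubAB : ({a, b} : Set Pt) ⊆ ({a, b, d} : Set Pt) := by
    intro p hp; rcases hp with rfl | rfl
    · exact Set.mem_insert _ _
    · exact Set.mem_insert_of_mem _ (Set.mem_insert _ _)
  have hmid' : (1-s₁)•y + s₁•x ∈ convexHull ℝ ({a, b, d} : Set Pt) :=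
    convexHull_mono hsubAB hmid
  have hq : ∀ s : ℝ, 2*⟪(1-s)•y + s•x, w⟫ = (1-s)*(2*⟪y, w⟫) + s*(2*⟪x, w⟫) := by
    intro s
    rw [inner_add_left, real_inner_smul_left, real_inner_smul_left]
    ring
  have h1 : (1-s₁)*(2*⟪y, w⟫) + s₁*(2*⟪x, w⟫) + K = 0 := by
    have := hle hmid
    simp only [Set.mem_setOf_eq] at this
    have h2 := hge hmid'
    simp only [Set.mem_setOf_eq] at h2
    rw [hq s₁] at this h2
    linarith
  have h2 : 0 ≤ (1-s₂)*(2*⟪y, w⟫) + s₂*(2*⟪x, w⟫) + K := by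
    have := hge hnext
    simp only [Set.mem_setOf_eq] at this
    rw [hq s₂] at this
    linarith
  have hx0 : 0 ≤ 2*⟪x, w⟫ + K := by
    set A := 2*⟪y, w⟫
    set B := 2*⟪x, w⟫
    have hBA : 0 ≤ (s₂ - s₁) * (B - A) := by nlinarith
    have hBA' : 0 ≤ B - A := nonneg_of_mul_nonneg_right hBA (by linarith)
    nlinarith
  have := hh x
  linarith

lemma gamma_mem_of_between {V : Set Pt} (hV : Convex ℝ V) {x y : Pt} {s₁ s₂ s : ℝ}
    (h1 : (1-s₁)•y + s₁•x ∈ V) (h2 : (1-s₂)•y + s₂•x ∈ V)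
    (hls : s₁ ≤ s) (hrs : s ≤ s₂) : (1-s)•y + s•x ∈ V := by
  rcases eq_or_lt_of_le (le_trans hls hrs : s₁ ≤ s₂) with heq | hlt
  · have : s = s₁ := le_antisymm (heq ▸ hrs) hls
    rw [this]; exact h1
  · set a := (s₂ - s)/(s₂ - s₁) with ha
    set b := (s - s₁)/(s₂ - s₁) with hb
    have hd : (0:ℝ) < s₂ - s₁ := by linarith
    have ha0 : 0 ≤ a := div_nonneg (by linarith) (le_of_lt hd)
    have hb0 : 0 ≤ b := div_nonneg (by linarith) (le_of_lt hd)
    have hab : a + b = 1 := by rw [ha, hb]; field_simp; ring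
    have := hV h1 h2 ha0 hb0 hab
    convert this using 1
    match_scalars <;> rw [ha, hb] <;> field_simp <;> ring

/-- Lemma of Delaunay: a triangulation `T` of `X` is Delaunay (every triangle has an empty
open circumdisc with respect to `X`) if and only if for every triangle, no vertex of any
adjacent triangle (i.e. sharing an edge) lies in its open circumdisc. -/
theorem delaunay_lemma (X : Finset Pt) (T : Finset (Finset Pt))
    (hX : GenPos X) (hT : IsTriangulation X T) :
    (∀ t ∈ T, ∀ (c : Pt) (r : ℝ), (∀ v ∈ t, dist v c = r) →
        ∀ x ∈ X, dist x c < r → x ∈ t)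
    ↔ (∀ t ∈ T, ∀ t' ∈ T, (t ∩ t').card = 2 →
        ∀ (c : Pt) (r : ℝ), (∀ v ∈ t, dist v c = r) →
        ∀ v ∈ t', dist v c < r → v ∈ t) := by
  constructor
  · intro h t ht t' ht' _ c r hcr v hv hdist
    exact h t ht c r hcr v (tri_subset_X hT ht' hv) hdist
  · intro hlocal t ht c r hcr x hxX hxlt
    by_contra hxt
    classical
    -- choose circumcenters for all triangles
    have hex : ∀ u : Finset Pt, ∃ (z : Pt) (ρ : ℝ), u ∈ T → ∀ w ∈ u, dist w z = ρ := by
      intro u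
      by_cases hu : u ∈ T
      · obtain ⟨a, b, c', hab, hac, hbc, habc⟩ := Finset.card_eq_three.mp (hT.card u hu)
        have hncol := hX.1 u (tri_subset_X hT hu) (hT.card u hu)
        rw [habc] at hncol
        have hncol' : ¬ Collinear ℝ ({a, b, c'} : Set Pt) := by simpa using hncol
        obtain ⟨z, ρ, h1, h2, h3⟩ := circum_exists hncol'
        refine ⟨z, ρ, fun _ w hw => ?_⟩
        rw [habc] at hw
        simp only [Finset.mem_insert, Finset.mem_singleton] at hw
        rcases hw with rfl | rfl | rfl <;> assumption
      · exact ⟨0, 0, fun h => absurd h hu⟩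
    choose ctr rad hctr using hex
    -- vertices of t
    obtain ⟨a, b, c3, hab, hac, hbc, habc⟩ := Finset.card_eq_three.mp (hT.card t ht)
    have hncolt : ¬ Collinear ℝ ({a, b, c3} : Set Pt) := by
      have := hX.1 t (tri_subset_X hT ht) (hT.card t ht)
      rw [habc] at this
      simpa using this
    have hset : (t : Set Pt) = ({a, b, c3} : Set Pt) := by rw [habc]; simp
    -- x is not in the convex hull of t
    have hxconv : x ∉ convexHull ℝ (t : Set Pt) :=
      fun h => hxt (mem_of_mem_convexHull hX hT ht hxX h)
    -- choose base point y
    obtain ⟨y, hyint, hyline⟩ := exists_good_basepoint (X := X) x hncolt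
    have hyconv : y ∈ convexHull ℝ (t : Set Pt) := by
      rw [hset]; exact interior_subset hyint
    have hyx : y ≠ x := fun h => hxconv (h ▸ hyconv)
    set γ : ℝ → Pt := fun s => (1-s)•y + s•x with hγ
    have hγ0 : γ 0 = y := by simp [hγ]
    have hγ1 : γ 1 = x := by simp [hγ]
    have hγcont : Continuous γ := by fun_prop
    -- γ s lies in the union of triangles
    have hγmem : ∀ s : ℝ, 0 ≤ s → s ≤ 1 → ∃ v ∈ T, γ s ∈ convexHull ℝ (v : Set Pt) := by
      intro s h0 h1
      have hyX : y ∈ convexHull ℝ (X : Set Pt) :=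
        convexHull_mono (by exact_mod_cast tri_subset_X hT ht) hyconv
      have hxXc : x ∈ convexHull ℝ (X : Set Pt) := subset_convexHull ℝ _ (by exact_mod_cast hxX)
      have : γ s ∈ convexHull ℝ (X : Set Pt) :=
        (convex_convexHull ℝ _) hyX hxXc (by linarith) h0 (by ring)
      rw [← hT.cover] at this
      obtain ⟨v, hv, hmem⟩ := Set.mem_iUnion₂.mp this
      exact ⟨v, hv, hmem⟩
    -- γ s is not a point of X for s < 1
    have hγnX : ∀ s : ℝ, 0 ≤ s → s < 1 → γ s ∉ (X : Set Pt) := by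
      intro s h0 h1 hmem
      have h1s : (1:ℝ) - s ≠ 0 := by linarith
      by_cases hqx : γ s = x
      · apply hyx
        have h' : (1-s)•y + s•x = x := hqx
        have h2 : (1-s)•y + s•x - s•x = x - s•x := by rw [h']
        rw [add_sub_cancel_right] at h2
        have h3 : (1-s)•y = (1-s)•x := by rw [h2]; module
        exact smul_right_injective Pt h1s h3
      · have hqX : γ s ∈ X := by exact_mod_cast hmem
        have hyl : y ∈ (line[ℝ, x, γ s] : AffineSubspace ℝ Pt) := by
          have hkey : y = AffineMap.lineMap x (γ s) ((1:ℝ)/(1-s)) := by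
            rw [AffineMap.lineMap_apply]
            simp only [hγ, vsub_eq_sub, vadd_eq_add]
            match_scalars <;> field_simp <;> ring
          rw [hkey]
          exact AffineMap.lineMap_mem_affineSpan_pair _ _ _
        exact hyline (γ s) hqX hqx hyl
    -- the set C of parameters reachable by "good" triangles
    set C : Set ℝ := {s : ℝ | s ∈ Set.Icc (0:ℝ) 1 ∧ ∃ u ∈ T,
        dist x (ctr u)^2 - rad u^2 ≤ dist x c^2 - r^2 ∧ γ s ∈ convexHull ℝ (u : Set Pt)}
      with hC
    have hCclosed : IsClosed C := by
      have : C = ⋃ u ∈ {u : Finset Pt | u ∈ T ∧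
          dist x (ctr u)^2 - rad u^2 ≤ dist x c^2 - r^2},
          (Set.Icc (0:ℝ) 1 ∩ γ ⁻¹' (convexHull ℝ (u : Set Pt))) := by
        ext s
        simp only [hC, Set.mem_setOf_eq, Set.mem_iUnion, Set.mem_inter_iff, Set.mem_preimage]
        constructor
        · rintro ⟨hs, u, hu, hg, hm⟩; exact ⟨u, ⟨hu, hg⟩, hs, hm⟩
        · rintro ⟨u, ⟨hu, hg⟩, hs, hm⟩; exact ⟨hs, u, hu, hg, hm⟩
      rw [this]
      apply Set.Finite.isClosed_biUnion
      · exact (T.finite_toSet.subset (fun u hu => hu.1))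
      · intro u _
        exact IsClosed.inter isClosed_Icc
          (IsClosed.preimage hγcont ((u.finite_toSet).isClosed_convexHull (𝕜 := ℝ)))
    -- Good t
    have hGoodt : dist x (ctr t)^2 - rad t^2 ≤ dist x c^2 - r^2 := by
      have h1 := hctr t ht
      have heq := circum_unique hncolt
        (h1 a (by rw [habc]; simp)) (h1 b (by rw [habc]; simp)) (h1 c3 (by rw [habc]; simp))
        (hcr a (by rw [habc]; simp)) (hcr b (by rw [habc]; simp)) (hcr c3 (by rw [habc]; simp))
      rw [heq.1, heq.2]
    have h0C : (0:ℝ) ∈ C := by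
      refine ⟨⟨le_refl _, zero_le_one⟩, t, ht, hGoodt, ?_⟩
      rw [hγ0]; exact hyconv
    set D : Set ℝ := {s : ℝ | s ∈ Set.Icc (0:ℝ) 1 ∧ Set.Icc 0 s ⊆ C} with hD
    have h0D : (0:ℝ) ∈ D := by
      refine ⟨⟨le_refl _, zero_le_one⟩, ?_⟩
      intro s hs
      have : s = 0 := le_antisymm hs.2 hs.1
      rw [this]; exact h0C
    have hDne : D.Nonempty := ⟨0, h0D⟩
    have hDbdd : BddAbove D := ⟨1, fun s hs => hs.1.2⟩
    set σ : ℝ := sSup D with hσ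
    have hσ0 : 0 ≤ σ := le_csSup hDbdd h0D
    have hσ1 : σ ≤ 1 := csSup_le hDne (fun s hs => hs.1.2)
    have hIccC : Set.Icc (0:ℝ) σ ⊆ C := by
      intro s hs
      rcases lt_or_eq_of_le hs.2 with hlt | heq
      · obtain ⟨d, hd, hsd⟩ := exists_lt_of_lt_csSup hDne hlt
        exact hd.2 ⟨hs.1, le_of_lt hsd⟩
      · rcases eq_or_lt_of_le hs.1 with h0 | h0
        · rw [← h0]; exact h0C
        · have hsub : Set.Ico (0:ℝ) s ⊆ C := by
            intro s' hs'
            obtain ⟨d, hd, hsd⟩ := exists_lt_of_lt_csSup hDne (heq ▸ hs'.2)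
            exact hd.2 ⟨hs'.1, le_of_lt hsd⟩
          have hcl : s ∈ closure (Set.Ico (0:ℝ) s) := by
            rw [closure_Ico (ne_of_lt h0)]
            exact ⟨le_of_lt h0, le_refl _⟩
          have := closure_mono hsub hcl
          rwa [hCclosed.closure_eq] at this
    have hσD : σ ∈ D := ⟨⟨hσ0, hσ1⟩, hIccC⟩
    rcases eq_or_lt_of_le hσ1 with hσeq | hσlt
    · -- σ = 1 : contradiction with x strictly inside circumcircle of t
      have h1C : (1:ℝ) ∈ C := by
        rw [← hσeq]
        exact hIccC ⟨hσ0, le_refl _⟩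
      obtain ⟨_, u, hu, hg, hm⟩ := h1C
      rw [hγ1] at hm
      have hxu : x ∈ u := mem_of_mem_convexHull hX hT hu hxX hm
      have : dist x (ctr u) = rad u := hctr u hu x hxu
      have hd0 : 0 ≤ dist x c := dist_nonneg
      have hz : dist x (ctr u)^2 - rad u^2 = 0 := by rw [this]; ring
      have h0' : dist x c^2 - r^2 < 0 := by nlinarith [mul_pos (sub_pos.mpr hxlt) (by linarith : (0:ℝ) < r + dist x c)]
      linarith
    · -- σ < 1 : we can extend beyond σ, contradiction with sSup
      have hσC := hIccC ⟨hσ0, le_refl σ⟩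
      obtain ⟨_, u, hu, hGu, hmu⟩ := hσC
      -- find a triangle v containing γ s for some s ∈ (σ, 1]
      have hcov : Set.Ioc σ 1 ⊆ ⋃ v ∈ T, {s : ℝ | γ s ∈ convexHull ℝ (v : Set Pt)} := by
        intro s hs
        obtain ⟨v, hv, hm⟩ := hγmem s (le_trans hσ0 (le_of_lt hs.1)) hs.2
        exact Set.mem_biUnion hv hm
      have hclos : σ ∈ closure (⋃ v ∈ T, (Set.Ioc σ 1 ∩ {s : ℝ | γ s ∈ convexHull ℝ (v : Set Pt)})) := by
        have h1 : σ ∈ closure (Set.Ioc σ 1) := by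
          rw [closure_Ioc (ne_of_lt hσlt)]
          exact ⟨le_refl _, le_of_lt hσlt⟩
        refine closure_mono ?_ h1
        intro s hs
        obtain ⟨v, hv, hm⟩ := hγmem s (le_trans hσ0 (le_of_lt hs.1)) hs.2
        exact Set.mem_biUnion hv ⟨hs, hm⟩
      rw [T.closure_biUnion] at hclos
      obtain ⟨v, hv, hvc⟩ := Set.mem_iUnion₂.mp hclos
      have hJclosed : IsClosed {s : ℝ | γ s ∈ convexHull ℝ (v : Set Pt)} :=
        IsClosed.preimage hγcont ((v.finite_toSet).isClosed_convexHull (𝕜 := ℝ))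
      have hσv : γ σ ∈ convexHull ℝ (v : Set Pt) := by
        have := closure_mono (Set.inter_subset_right) hvc
        rwa [hJclosed.closure_eq] at this
      have hne : (Set.Ioc σ 1 ∩ {s : ℝ | γ s ∈ convexHull ℝ (v : Set Pt)}).Nonempty := by
        rcases Set.eq_empty_or_nonempty (Set.Ioc σ 1 ∩ {s : ℝ | γ s ∈ convexHull ℝ (v : Set Pt)}) with he | hne
        · rw [he, closure_empty] at hvc; exact absurd hvc (Set.notMem_empty _)
        · exact hne
      obtain ⟨s₁, hs₁Ioc, hs₁J⟩ := hne
      -- v is good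
      have hGv : dist x (ctr v)^2 - rad v^2 ≤ dist x c^2 - r^2 := by
        by_cases huv : u = v
        · rw [← huv]; exact hGu
        · -- γ σ lies in conv(u ∩ v)
          have hmi : γ σ ∈ convexHull ℝ ((u ∩ v : Finset Pt) : Set Pt) := by
            rw [← hT.inter u hu v hv]
            exact ⟨hmu, hσv⟩
          have hcard : (u ∩ v).card ≤ 3 :=
            le_trans (Finset.card_le_card Finset.inter_subset_left) (le_of_eq (hT.card u hu))
          have hγσnX : γ σ ∉ (X : Set Pt) := hγnX σ hσ0 hσlt
          interval_cases hcd : (u ∩ v).card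
          · rw [Finset.card_eq_zero.mp hcd] at hmi
            simp at hmi
          · obtain ⟨p, hp⟩ := Finset.card_eq_one.mp hcd
            rw [hp] at hmi
            simp only [Finset.coe_singleton, convexHull_singleton, Set.mem_singleton_iff] at hmi
            exfalso
            apply hγσnX
            rw [hmi]
            exact_mod_cast tri_subset_X hT hu (Finset.inter_subset_left (hp ▸ Finset.mem_singleton_self p))
          · -- the real case: u and v share an edge
            obtain ⟨p, q, hpq, hpqe⟩ := Finset.card_eq_two.mp hcd
            have hpu : p ∈ u := Finset.inter_subset_left (hpqe ▸ (by simp : p ∈ ({p,q} : Finset Pt)))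
            have hqu : q ∈ u := Finset.inter_subset_left (hpqe ▸ (by simp : q ∈ ({p,q} : Finset Pt)))
            have hpv : p ∈ v := Finset.inter_subset_right (hpqe ▸ (by simp : p ∈ ({p,q} : Finset Pt)))
            have hqv : q ∈ v := Finset.inter_subset_right (hpqe ▸ (by simp : q ∈ ({p,q} : Finset Pt)))
            -- third vertex d of v
            have hsub2 : ({p, q} : Finset Pt) ⊆ v := by
              intro w hw
              simp only [Finset.mem_insert, Finset.mem_singleton] at hw
              rcases hw with rfl | rfl <;> assumption
            have hcard2 : ({p, q} : Finset Pt).card = 2 := by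
              rw [Finset.card_insert_of_notMem (by simp [hpq])]; rfl
            have hvd : (v \ ({p, q} : Finset Pt)).card = 1 := by
              rw [Finset.card_sdiff_of_subset hsub2, hT.card v hv, hcard2]
            obtain ⟨d, hd⟩ := Finset.card_eq_one.mp hvd
            have hdv : d ∈ v := (Finset.mem_sdiff.mp (hd ▸ Finset.mem_singleton_self d)).1
            have hdpq : d ∉ ({p, q} : Finset Pt) :=
              (Finset.mem_sdiff.mp (hd ▸ Finset.mem_singleton_self d)).2
            have hdu : d ∉ u := by
              intro hdu
              exact hdpq (hpqe ▸ Finset.mem_inter.mpr ⟨hdu, hdv⟩)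
            have hveq : v = ({p, q, d} : Finset Pt) := by
              symm
              apply Finset.eq_of_subset_of_card_le
              · intro w hw
                simp only [Finset.mem_insert, Finset.mem_singleton] at hw
                rcases hw with rfl | rfl | rfl <;> assumption
              · rw [hT.card v hv]
                rw [Finset.card_insert_of_notMem, Finset.card_insert_of_notMem]
                · rfl
                · simp only [Finset.mem_singleton]
                  intro h; exact hdpq (by simp [h])
                · simp only [Finset.mem_insert, Finset.mem_singleton]
                  intro h
                  rcases h with h | h
                  · exact hpq h
                  · exact hdpq (by simp [h])
            -- apply the local Delaunay condition
            have hdru : rad u ≤ dist d (ctr u) := by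
              by_contra hlt'
              push_neg at hlt'
              exact hdu (hlocal u hu v hv (by rw [hpqe, hcard2]) (ctr u) (rad u)
                (hctr u hu) d hdv hlt')
            have hstep := edge_step (cu := ctr u) (cv := ctr v) (ru := rad u) (rv := rad v)
              (a := p) (b := q) (d := d) (x := x) (y := y) (s₁ := σ) (s₂ := s₁)
              (hctr u hu p hpu) (hctr u hu q hqu)
              (hctr v hv p hpv) (hctr v hv q hqv) (hctr v hv d hdv)
              hdru (by rw [← hctr u hu p hpu]; exact dist_nonneg)
              (by rw [hpqe] at hmi; simpa using hmi)
              (by rw [hveq] at hs₁J; simpa using hs₁J)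
              hs₁Ioc.1 hσ0 hs₁Ioc.2
            linarith
          · -- card 3 means u = v, contradiction
            exfalso
            apply huv
            have h1 : u ∩ v = u := Finset.eq_of_subset_of_card_le Finset.inter_subset_left
              (by rw [hcd, hT.card u hu])
            have h2 : u ⊆ v := by rw [← h1]; exact Finset.inter_subset_right
            exact Finset.eq_of_subset_of_card_le h2 (by rw [hT.card u hu, hT.card v hv])
      -- s₁ ∈ D, contradicting σ = sSup D < s₁
      have hs₁D : s₁ ∈ D := by
        refine ⟨⟨le_trans hσ0 (le_of_lt hs₁Ioc.1), hs₁Ioc.2⟩, ?_⟩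
        intro s hs
        by_cases hss : s ≤ σ
        · exact hIccC ⟨hs.1, hss⟩
        · push_neg at hss
          refine ⟨⟨hs.1, le_trans hs.2 hs₁Ioc.2⟩, v, hv, hGv, ?_⟩
          exact gamma_mem_of_between (convex_convexHull ℝ _) hσv hs₁J (le_of_lt hss) hs.2
      have := le_csSup hDbdd hs₁D
      rw [← hσ] at this
      exact absurd this (not_le.mpr hs₁Ioc.1)
end
end

section
/- Let f: D(X) → R assign to each vertex the value 0, to each triangle and each Gabriel edge the radius of its circumcircle, and to each non-Gabriel edge the minimum of the filtration values of its adjacent triangles. Then for every r ≥ 0, the sublevel complex f^{-1}([0, r]) equals the alpha complex A(X)_r. -/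
noncomputable section

/-- The Voronoi cell of `x` with respect to the point set `X`. -/
def Vor (X : Finset Pt) (x : Pt) : Set Pt := {p | ∀ y ∈ X, dist p x ≤ dist p y}

/-- `R_x(r) = B_x(r) ∩ V_x`. -/
def RCell (X : Finset Pt) (x : Pt) (r : ℝ) : Set Pt := Metric.closedBall x r ∩ Vor X x

/-- The alpha complex `A(X)_r`: the nerve of the cover `{R_x(r)}_{x ∈ X}`. -/
def AlphaCpx (X : Finset Pt) (r : ℝ) : Set (Finset Pt) :=
  {σ | σ.Nonempty ∧ (σ : Set Pt) ⊆ (X : Set Pt) ∧ (⋂ x ∈ σ, RCell X x r).Nonempty}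

/-- The Delaunay triangulation `D(X)` as the nerve of the Voronoi diagram. -/
def DelNerve (X : Finset Pt) : Set (Finset Pt) :=
  {σ | σ.Nonempty ∧ (σ : Set Pt) ⊆ (X : Set Pt) ∧ (⋂ x ∈ σ, Vor X x).Nonempty}

/-- The edge `{a,b}` is Gabriel: the open disc having the edge as diameter
contains no point of `X`. -/
def IsGabriel (X : Finset Pt) (a b : Pt) : Prop :=
  ∀ x ∈ X, dist a b / 2 ≤ dist x (midpoint ℝ a b)

/- ===================== auxiliary lemmas ===================== -/

lemma norm_le_of_sq_le {x y : Pt} (h : ‖x‖ ^ 2 ≤ ‖y‖ ^ 2) : ‖x‖ ≤ ‖y‖ := by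
  nlinarith [norm_nonneg x, norm_nonneg y]

lemma norm_eq_of_sq_eq {x y : Pt} (h : ‖x‖ ^ 2 = ‖y‖ ^ 2) : ‖x‖ = ‖y‖ :=
  le_antisymm (norm_le_of_sq_le h.le) (norm_le_of_sq_le h.ge)

lemma G_affine (p m a y : Pt) (t : ℝ) :
    ‖((1 - t) • p + t • m) - y‖ ^ 2 - ‖((1 - t) • p + t • m) - a‖ ^ 2
      = (1 - t) * (‖p - y‖ ^ 2 - ‖p - a‖ ^ 2) + t * (‖m - y‖ ^ 2 - ‖m - a‖ ^ 2) := by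
  simp only [norm_sub_sq_real, inner_add_left, real_inner_smul_left]
  ring

lemma comb_sub (p m a : Pt) (t : ℝ) :
    ((1 - t) • p + t • m) - a = (1 - t) • (p - a) + t • (m - a) := by
  simp [smul_sub]; module

open RealInnerProductSpace EuclideanGeometry in
lemma unique_equidist {a b c z z' : Pt} (h : ¬ Collinear ℝ ({a, b, c} : Set Pt))
    (hz1 : dist a z = dist b z) (hz2 : dist a z = dist c z)
    (hz'1 : dist a z' = dist b z') (hz'2 : dist a z' = dist c z') : z = z' := by
  by_contra hne
  apply h
  have h1 : (inner ℝ (z' - z) (b - a) : ℝ) = 0 := by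
    simpa using inner_vsub_vsub_of_dist_eq_of_dist_eq hz1 hz'1
  have h2 : (inner ℝ (z' - z) (c - a) : ℝ) = 0 := by
    simpa using inner_vsub_vsub_of_dist_eq_of_dist_eq hz2 hz'2
  have hmem : ∀ v ∈ ({a, b, c} : Set Pt), (inner ℝ (z' - z) (v - a) : ℝ) = 0 := by
    rintro v (rfl | rfl | rfl) <;> simp [h1, h2]
  rw [collinear_iff_rank_le_one]
  have hle : vectorSpan ℝ ({a, b, c} : Set Pt) ≤ (ℝ ∙ (z' - z))ᗮ := by
    rw [vectorSpan_def, Submodule.span_le]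
    rintro v ⟨x, hx, y, hy, rfl⟩
    rw [SetLike.mem_coe, Submodule.mem_orthogonal_singleton_iff_inner_right]
    show (inner ℝ (z' - z) (x -ᵥ y) : ℝ) = 0
    rw [show (x -ᵥ y : Pt) = (x - a) - (y - a) by simp, inner_sub_right,
      hmem x hx, hmem y hy, sub_zero]
  have hv : (z' - z) ≠ 0 := sub_ne_zero.mpr (Ne.symm hne)
  have hfr : Module.finrank ℝ ((ℝ ∙ (z' - z))ᗮ : Submodule ℝ Pt) = 1 := by
    have := Submodule.finrank_add_finrank_orthogonal (K := ℝ ∙ (z' - z)) (E := Pt)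
    rw [finrank_span_singleton hv] at this
    have h2 : Module.finrank ℝ Pt = 2 := by simp [finrank_euclideanSpace]
    omega
  calc Module.rank ℝ (vectorSpan ℝ ({a, b, c} : Set Pt))
      ≤ Module.rank ℝ ((ℝ ∙ (z' - z))ᗮ : Submodule ℝ Pt) := Submodule.rank_mono hle
    _ = 1 := by rw [← Module.finrank_eq_rank, hfr]; norm_num

/-- The point of `⋂ Vor` over a triangle coincides with any equidistant center. -/
lemma center_eq {X : Finset Pt} (hX : GenPos X) {σ : Finset Pt}
    (hsub : (σ : Set Pt) ⊆ (X : Set Pt)) (hcard : σ.card = 3) {p : Pt}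
    (hp : ∀ x ∈ σ, p ∈ Vor X x) {c : Pt} {ρ : ℝ} (hc : ∀ v ∈ σ, dist v c = ρ) :
    ∀ v ∈ σ, dist v p = ρ := by
  have hXmem : ∀ v ∈ σ, v ∈ X := fun v hv => by
    exact_mod_cast hsub (Finset.mem_coe.mpr hv)
  have hpd : ∀ v ∈ σ, ∀ w ∈ σ, dist v p = dist w p := by
    intro v hv w hw
    rw [dist_comm v p, dist_comm w p]
    exact le_antisymm (hp v hv w (hXmem w hw)) (hp w hw v (hXmem v hv))
  obtain ⟨a, b, c₀, hab, hac, hbc, rfl⟩ := Finset.card_eq_three.mp hcard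
  have hncol : ¬ Collinear ℝ ({a, b, c₀} : Set Pt) := by
    have := hX.1 {a, b, c₀} (Finset.coe_subset.mp hsub) hcard
    simpa using this
  have ha : a ∈ ({a, b, c₀} : Finset Pt) := by simp
  have hb : b ∈ ({a, b, c₀} : Finset Pt) := by simp
  have hc₀ : c₀ ∈ ({a, b, c₀} : Finset Pt) := by simp
  have hpc : p = c := by
    refine unique_equidist hncol (hpd a ha b hb) (hpd a ha c₀ hc₀) ?_ ?_
    · rw [hc a ha, hc b hb]
    · rw [hc a ha, hc c₀ hc₀]
  intro v hv
  rw [hpc]; exact hc v hv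

/-- Crossing along the segment from `p` to the midpoint produces a Delaunay triangle. -/
lemma exists_triangle {X : Finset Pt} {a b : Pt}
    (haX : a ∈ X) (hbX : b ∈ X) (hng : ¬ IsGabriel X a b) {p : Pt}
    (hpa : p ∈ Vor X a) (hpb : p ∈ Vor X b) :
    ∃ c q : Pt, c ∈ X ∧ c ≠ a ∧ c ≠ b ∧
      q ∈ Vor X a ∧ q ∈ Vor X b ∧ q ∈ Vor X c ∧
      dist a q = dist b q ∧ dist a q = dist c q ∧ dist q a ≤ dist p a := by
  classical
  set m : Pt := midpoint ℝ a b with hm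
  set G : Pt → Pt → ℝ := fun y u => ‖u - y‖ ^ 2 - ‖u - a‖ ^ 2 with hGdef
  have hGp : ∀ y ∈ X, 0 ≤ G y p := by
    intro y hy
    have h1 : dist p a ≤ dist p y := hpa y hy
    rw [dist_eq_norm, dist_eq_norm] at h1
    have := pow_le_pow_left₀ (norm_nonneg _) h1 2
    simpa [hGdef] using sub_nonneg.mpr this
  have hma : ‖m - a‖ = dist a b / 2 := by
    rw [← dist_eq_norm, hm, dist_midpoint_left]
    norm_num; ring
  have hmb : ‖m - b‖ = dist a b / 2 := by
    rw [← dist_eq_norm, hm, dist_midpoint_right]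
    norm_num; ring
  have hpab : dist p a = dist p b := le_antisymm (hpa b hbX) (hpb a haX)
  have hGmb : G b m = 0 := by simp [hGdef, hmb, hma]
  have hGpb : G b p = 0 := by
    have : ‖p - b‖ = ‖p - a‖ := by rw [← dist_eq_norm, ← dist_eq_norm, ← hpab]
    simp [hGdef, this]
  -- non-Gabriel gives a point strictly inside the diametral disc
  rw [IsGabriel] at hng
  push_neg at hng
  obtain ⟨x, hxX, hx⟩ := hng
  have hGmx : G x m < 0 := by
    have h1 : ‖m - x‖ < ‖m - a‖ := by
      rw [hma, ← dist_eq_norm, dist_comm]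
      exact hx
    have := pow_lt_pow_left₀ h1 (norm_nonneg _) (two_ne_zero)
    simp only [hGdef]
    linarith
  set Y : Finset Pt := X.filter (fun y => G y m < 0) with hY
  have hxY : x ∈ Y := by simp [hY, hxX, hGmx]
  obtain ⟨c, hcY, hcmin⟩ :=
    Y.exists_min_image (fun y => G y p / (G y p - G y m)) ⟨x, hxY⟩
  have hcX : c ∈ X := (Finset.mem_filter.mp hcY).1
  have hGmc : G c m < 0 := (Finset.mem_filter.mp hcY).2
  have hden : ∀ y ∈ Y, 0 < G y p - G y m := by
    intro y hy
    have h1 := hGp y (Finset.mem_filter.mp hy).1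
    have h2 := (Finset.mem_filter.mp hy).2
    linarith
  set s : ℝ := G c p / (G c p - G c m) with hs
  have hs0 : 0 ≤ s := div_nonneg (hGp c hcX) (hden c hcY).le
  have hs1 : s ≤ 1 := by
    rw [hs, div_le_one (hden c hcY)]
    linarith [hGmc]
  set q : Pt := (1 - s) • p + s • m with hq
  have hGq : ∀ y, G y q = (1 - s) * G y p + s * G y m := by
    intro y
    simp only [hGdef, hq]
    exact G_affine p m a y s
  have hq_nonneg : ∀ y ∈ X, 0 ≤ G y q := by
    intro y hy
    by_cases hym : G y m < 0
    · have hyY : y ∈ Y := by simp [hY, hy, hym]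
      have hle : s ≤ G y p / (G y p - G y m) := hcmin y hyY
      have hd := hden y hyY
      have h1 : s * (G y p - G y m) ≤ (G y p / (G y p - G y m)) * (G y p - G y m) :=
        mul_le_mul_of_nonneg_right hle hd.le
      rw [div_mul_cancel₀ _ hd.ne'] at h1
      have hexp : (1 - s) * G y p + s * G y m = G y p - s * (G y p - G y m) := by ring
      rw [hGq y, hexp]
      linarith
    · push_neg at hym
      rw [hGq y]
      have := hGp y hy
      have h1 : 0 ≤ (1 - s) * G y p := mul_nonneg (by linarith) this
      have h2 : 0 ≤ s * G y m := mul_nonneg hs0 hym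
      linarith
  have hq_c : G c q = 0 := by
    rw [hGq c, hs]
    have hd := (hden c hcY).ne'
    field_simp
    ring
  have hq_b : G b q = 0 := by rw [hGq b, hGpb, hGmb]; ring
  -- translate back to distances
  have hdist_le : ∀ y ∈ X, dist q a ≤ dist q y := by
    intro y hy
    rw [dist_eq_norm, dist_eq_norm]
    exact norm_le_of_sq_le (by have := hq_nonneg y hy; simp only [hGdef] at this; linarith)
  have hdqb : dist q b = dist q a := by
    rw [dist_eq_norm, dist_eq_norm]
    exact norm_eq_of_sq_eq (by simp only [hGdef] at hq_b; linarith)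
  have hdqc : dist q c = dist q a := by
    rw [dist_eq_norm, dist_eq_norm]
    exact norm_eq_of_sq_eq (by simp only [hGdef] at hq_c; linarith)
  have hqa : q ∈ Vor X a := fun y hy => hdist_le y hy
  have hqb : q ∈ Vor X b := fun y hy => by rw [hdqb]; exact hdist_le y hy
  have hqc : q ∈ Vor X c := fun y hy => by rw [hdqc]; exact hdist_le y hy
  have hca : c ≠ a := by
    intro h
    rw [h] at hGmc
    simp [hGdef] at hGmc
  have hcb : c ≠ b := by
    intro h
    rw [h, hGmb] at hGmc
    exact lt_irrefl 0 hGmc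
  -- the bound
  have hd2 : dist a b / 2 ≤ dist p a := by
    have := dist_triangle a p b
    rw [dist_comm a p] at this
    linarith [hpab]
  have hbound : dist q a ≤ dist p a := by
    have h1 : q - a = (1 - s) • (p - a) + s • (m - a) := comb_sub p m a s
    have h2 : ‖q - a‖ ≤ (1 - s) * ‖p - a‖ + s * ‖m - a‖ := by
      rw [h1]
      calc ‖(1 - s) • (p - a) + s • (m - a)‖
          ≤ ‖(1 - s) • (p - a)‖ + ‖s • (m - a)‖ := norm_add_le _ _
        _ = (1 - s) * ‖p - a‖ + s * ‖m - a‖ := by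
            rw [norm_smul, norm_smul, Real.norm_eq_abs, Real.norm_eq_abs,
              abs_of_nonneg (by linarith : (0:ℝ) ≤ 1 - s), abs_of_nonneg hs0]
    have h3 : ‖m - a‖ ≤ ‖p - a‖ := by
      rw [hma, ← dist_eq_norm]
      exact hd2
    rw [dist_eq_norm, dist_eq_norm]
    calc ‖q - a‖ ≤ (1 - s) * ‖p - a‖ + s * ‖m - a‖ := h2
      _ ≤ (1 - s) * ‖p - a‖ + s * ‖p - a‖ := by nlinarith
      _ = ‖p - a‖ := by ring
  exact ⟨c, q, hcX, hca, hcb, hqa, hqb, hqc,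
    by rw [dist_comm a q, dist_comm b q, hdqb],
    by rw [dist_comm a q, dist_comm c q, hdqc], hbound⟩

/-- Under general position, faces of the Delaunay nerve have at most 3 vertices. -/
lemma delNerve_card_le {X : Finset Pt} (hX : GenPos X) {σ : Finset Pt}
    (hσ : σ ∈ DelNerve X) : σ.card ≤ 3 := by
  obtain ⟨hne, hsub, p, hp⟩ := hσ
  by_contra h
  push_neg at h
  obtain ⟨s, hsσ, hscard⟩ := Finset.exists_subset_card_eq (s := σ) (n := 4) (by omega)
  have hsX : s ⊆ X := hsσ.trans (Finset.coe_subset.mp hsub)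
  apply hX.2 s hsX hscard
  have hmem : ∀ v ∈ σ, p ∈ Vor X v := fun v hv => Set.mem_iInter₂.mp hp v hv
  obtain ⟨v₀, hv₀⟩ := Finset.card_pos.mp (by omega : 0 < s.card)
  refine ⟨p, dist v₀ p, ?_⟩
  intro w hw
  have hXm : ∀ v ∈ σ, v ∈ X := fun v hv => by
    exact_mod_cast hsub (Finset.mem_coe.mpr hv)
  rw [dist_comm w p, dist_comm v₀ p]
  exact le_antisymm (hmem w (hsσ hw) v₀ (hXm v₀ (hsσ hv₀)))
    (hmem v₀ (hsσ hv₀) w (hXm w (hsσ hw)))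

/-- Let `f : D(X) → ℝ` assign `0` to each vertex, to each triangle and each Gabriel edge
the radius of its circumcircle, and to each non-Gabriel edge the minimum of the filtration
values of its adjacent triangles.  Then for every `r ≥ 0` the sublevel complex
`f⁻¹([0,r])` equals the alpha complex `A(X)_r`. -/
theorem sublevel_of_alpha_filtration_eq_alphaCpx
    (X : Finset Pt) (hX : GenPos X) (f : Finset Pt → ℝ)
    (hvertex : ∀ x ∈ X, f {x} = 0)
    (htriangle : ∀ σ ∈ DelNerve X, σ.card = 3 → ∃ c : Pt, ∀ v ∈ σ, dist v c = f σ)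
    (hgabriel : ∀ a b : Pt, a ≠ b → ({a, b} : Finset Pt) ∈ DelNerve X →
      IsGabriel X a b → f {a, b} = dist a b / 2)
    (hnongabriel : ∀ a b : Pt, a ≠ b → ({a, b} : Finset Pt) ∈ DelNerve X →
      ¬ IsGabriel X a b →
      (∃ t ∈ DelNerve X, t.card = 3 ∧ ({a, b} : Finset Pt) ⊆ t ∧ f {a, b} = f t) ∧
      (∀ t ∈ DelNerve X, t.card = 3 → ({a, b} : Finset Pt) ⊆ t → f {a, b} ≤ f t)) :
    ∀ r : ℝ, 0 ≤ r → {σ ∈ DelNerve X | f σ ≤ r} = AlphaCpx X r := by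
  intro r hr
  ext σ
  rw [Set.mem_sep_iff]
  constructor
  · rintro ⟨hσD, hfr⟩
    have hcard3 := delNerve_card_le hX hσD
    obtain ⟨hne, hsub, p, hp⟩ := hσD
    have hmem : ∀ x ∈ σ, p ∈ Vor X x := fun x hx => Set.mem_iInter₂.mp hp x hx
    have hXm : ∀ v ∈ σ, v ∈ X := fun v hv => by
      exact_mod_cast hsub (Finset.mem_coe.mpr hv)
    have hcard1 : 1 ≤ σ.card := Finset.card_pos.mpr hne
    refine ⟨hne, hsub, ?_⟩
    interval_cases h : σ.card
    · -- vertex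
      obtain ⟨x, rfl⟩ := Finset.card_eq_one.mp h
      refine ⟨x, ?_⟩
      rw [Set.mem_iInter₂]
      intro y hy
      simp only [Finset.mem_singleton] at hy
      subst hy
      exact ⟨by simpa using hr, fun z hz => by simpa using dist_nonneg⟩
    · -- edge
      obtain ⟨a, b, hab, rfl⟩ := Finset.card_eq_two.mp h
      have haX : a ∈ X := hXm a (by simp)
      have hbX : b ∈ X := hXm b (by simp)
      have hDab : ({a, b} : Finset Pt) ∈ DelNerve X := ⟨hne, hsub, p, hp⟩
      by_cases hgab : IsGabriel X a b
      · -- Gabriel edge: the midpoint is the witness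
        have hf := hgabriel a b hab hDab hgab
        refine ⟨midpoint ℝ a b, ?_⟩
        rw [Set.mem_iInter₂]
        intro y hy
        have hdy : dist (midpoint ℝ a b) y = dist a b / 2 := by
          simp only [Finset.mem_insert, Finset.mem_singleton] at hy
          rcases hy with rfl | rfl
          · rw [dist_midpoint_left]; norm_num; ring
          · rw [dist_midpoint_right]; norm_num; ring
        constructor
        · rw [Metric.mem_closedBall, hdy, ← hf]; exact hfr
        · intro z hz
          rw [hdy]
          calc dist a b / 2 ≤ dist z (midpoint ℝ a b) := hgab z hz
            _ = dist (midpoint ℝ a b) z := dist_comm z _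
      · -- non-Gabriel edge: use the minimal adjacent triangle
        obtain ⟨⟨t, htD, htcard, htsub, hft⟩, _⟩ := hnongabriel a b hab hDab hgab
        obtain ⟨htne, htsubX, p', hp'⟩ := htD
        have hmem' : ∀ x ∈ t, p' ∈ Vor X x := fun x hx => Set.mem_iInter₂.mp hp' x hx
        obtain ⟨c', hc'⟩ := htriangle t ⟨htne, htsubX, p', hp'⟩ htcard
        have hdist := center_eq hX htsubX htcard hmem' hc'
        have hat : a ∈ t := htsub (by simp)
        have hbt : b ∈ t := htsub (by simp)
        refine ⟨p', ?_⟩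
        rw [Set.mem_iInter₂]
        intro y hy
        simp only [Finset.mem_insert, Finset.mem_singleton] at hy
        have hyt : y ∈ t := by rcases hy with rfl | rfl <;> assumption
        constructor
        · rw [Metric.mem_closedBall, dist_comm]
          rw [hdist y hyt, ← hft]
          exact hfr
        · exact hmem' y hyt
    · -- triangle
      obtain ⟨c', hc'⟩ := htriangle σ ⟨hne, hsub, p, hp⟩ h
      have hdist := center_eq hX hsub h hmem hc'
      refine ⟨p, ?_⟩
      rw [Set.mem_iInter₂]
      intro y hy
      exact ⟨by rw [Metric.mem_closedBall, dist_comm, hdist y hy]; exact hfr, hmem y hy⟩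
  · rintro ⟨hne, hsub, p, hp⟩
    have hmemR : ∀ x ∈ σ, p ∈ RCell X x r := fun x hx => Set.mem_iInter₂.mp hp x hx
    have hmem : ∀ x ∈ σ, p ∈ Vor X x := fun x hx => (hmemR x hx).2
    have hball : ∀ x ∈ σ, dist p x ≤ r := fun x hx =>
      Metric.mem_closedBall.mp (hmemR x hx).1
    have hpV : p ∈ ⋂ x ∈ σ, Vor X x := Set.mem_iInter₂.mpr hmem
    have hσD : σ ∈ DelNerve X := ⟨hne, hsub, p, hpV⟩
    refine ⟨hσD, ?_⟩
    have hcard3 := delNerve_card_le hX hσD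
    have hcard1 : 1 ≤ σ.card := Finset.card_pos.mpr hne
    have hXm : ∀ v ∈ σ, v ∈ X := fun v hv => by
      exact_mod_cast hsub (Finset.mem_coe.mpr hv)
    interval_cases h : σ.card
    · -- vertex
      obtain ⟨x, rfl⟩ := Finset.card_eq_one.mp h
      rw [hvertex x (hXm x (by simp))]
      exact hr
    · -- edge
      obtain ⟨a, b, hab, rfl⟩ := Finset.card_eq_two.mp h
      have haX : a ∈ X := hXm a (by simp)
      have hbX : b ∈ X := hXm b (by simp)
      have hDab : ({a, b} : Finset Pt) ∈ DelNerve X := hσD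
      have hpa : p ∈ Vor X a := hmem a (by simp)
      have hpb : p ∈ Vor X b := hmem b (by simp)
      have hra : dist p a ≤ r := hball a (by simp)
      have hrb : dist p b ≤ r := hball b (by simp)
      by_cases hgab : IsGabriel X a b
      · rw [hgabriel a b hab hDab hgab]
        have := dist_triangle a p b
        rw [dist_comm a p] at this
        linarith
      · obtain ⟨_, hmin⟩ := hnongabriel a b hab hDab hgab
        obtain ⟨c, q, hcX, hca, hcb, hqa, hqb, hqc, hq1, hq2, hqle⟩ :=
          exists_triangle haX hbX hgab hpa hpb
        set t : Finset Pt := {a, b, c} with ht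
        have htcard : t.card = 3 := by
          rw [ht]
          rw [Finset.card_insert_of_notMem (by simp [hab, Ne.symm hca]),
            Finset.card_insert_of_notMem (by simp [Ne.symm hcb])]
          simp
        have htsubX : (t : Set Pt) ⊆ (X : Set Pt) := by
          intro v hv
          simp only [ht, Finset.coe_insert, Finset.coe_singleton, Set.mem_insert_iff,
            Set.mem_singleton_iff] at hv
          rcases hv with rfl | rfl | rfl
          · exact haX
          · exact hbX
          · exact hcX
        have hqmem : ∀ v ∈ t, q ∈ Vor X v := by
          intro v hv
          simp only [ht, Finset.mem_insert, Finset.mem_singleton] at hv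
          rcases hv with rfl | rfl | rfl
          · exact hqa
          · exact hqb
          · exact hqc
        have htD : t ∈ DelNerve X :=
          ⟨⟨a, by simp [ht]⟩, htsubX, q, Set.mem_iInter₂.mpr hqmem⟩
        obtain ⟨c', hc'⟩ := htriangle t htD htcard
        have hdist := center_eq hX htsubX htcard hqmem hc'
        have hfa : dist a q = f t := hdist a (by simp [ht])
        have hle1 : f {a, b} ≤ f t := hmin t htD htcard (by
          intro v hv
          simp only [Finset.mem_insert, Finset.mem_singleton] at hv
          rcases hv with rfl | rfl <;> simp [ht])
        have : f t ≤ r := by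
          rw [← hfa, dist_comm a q]
          exact hqle.trans hra
        linarith
    · -- triangle
      obtain ⟨c', hc'⟩ := htriangle σ hσD h
      have hdist := center_eq hX hsub h hmem hc'
      obtain ⟨v₀, hv₀⟩ := hne
      rw [← hdist v₀ hv₀, dist_comm]
      exact hball v₀ hv₀
end
end

section
/- With the grid-based cover {K_i}_{0≤i<M} of the Delaunay triangulation D(X), a simplex σ lies in the intersection ∩_{j∈J} K_j (for J ⊆ {0,...,M−1} with #J ≥ 2) if and only if σ is a boundary simplex of K_j for every j ∈ J. -/
/-- The cover element `K_i`: the subcomplex of the Delaunay triangulation `D` (given by its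
set of simplices, each a face of a triangle) consisting of all inner and boundary triangles
of the zone `B_i` (i.e. triangles with at least one vertex in `X_i = Z i`) together with
their faces. -/
def KCov {V : Type*} {M : ℕ} (D : Finset (Finset V)) (Z : Fin M → Finset V) (i : Fin M) :
    Set (Finset V) :=
  {σ | σ.Nonempty ∧ ∃ t, t ∈ D ∧ t.card = 3 ∧ (∃ v ∈ t, v ∈ Z i) ∧ σ ⊆ t}

/-- `σ` is a boundary simplex of `K_i`: a face of a boundary triangle of `B_i`, i.e. of a
triangle some but not all of whose vertices lie in `X_i = Z i`. -/
def BoundarySimplex {V : Type*} {M : ℕ} (D : Finset (Finset V)) (Z : Fin M → Finset V)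
    (i : Fin M) (σ : Finset V) : Prop :=
  σ.Nonempty ∧ ∃ t, t ∈ D ∧ t.card = 3 ∧ (∃ v ∈ t, v ∈ Z i) ∧ (∃ v ∈ t, v ∉ Z i) ∧ σ ⊆ t

/-- With the grid-based cover `{K_i}` of the Delaunay triangulation, a simplex `σ` lies in
the intersection `⋂_{j ∈ J} K_j` (for `#J ≥ 2`) if and only if `σ` is a boundary simplex of
`K_j` for every `j ∈ J`.  The zones partition the vertices: every vertex of a triangle of
`D` lies in exactly one zone. -/
theorem mem_inter_iff_boundarySimplex {V : Type*} {M : ℕ}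
    (D : Finset (Finset V)) (Z : Fin M → Finset V)
    (hpart : ∀ t ∈ D, ∀ v ∈ t, ∃! i : Fin M, v ∈ Z i)
    (J : Finset (Fin M)) (hJ : 2 ≤ J.card) (σ : Finset V) :
    (∀ j ∈ J, σ ∈ KCov D Z j) ↔ (∀ j ∈ J, BoundarySimplex D Z j σ) := by
  constructor
  · intro h j hj
    obtain ⟨hne, t, htD, hcard, ⟨v, hvt, hvZ⟩, hsub⟩ := h j hj
    by_cases hall : ∃ u ∈ t, u ∉ Z j
    · exact ⟨hne, t, htD, hcard, ⟨v, hvt, hvZ⟩, hall, hsub⟩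
    · push_neg at hall
      -- all vertices of t are in Z j, hence σ ⊆ Z j
      obtain ⟨k, hk, hkj⟩ : ∃ k ∈ J, k ≠ j := by
        obtain ⟨a, ha, b, hb, hab⟩ := Finset.one_lt_card.mp hJ
        by_cases hbj : b = j
        · exact ⟨a, ha, by rw [hbj] at hab; exact hab⟩
        · exact ⟨b, hb, hbj⟩
      obtain ⟨-, t', ht'D, hcard', ⟨w, hwt', hwZ⟩, hsub'⟩ := h k hk
      obtain ⟨x, hx⟩ := hne
      have hxZj : x ∈ Z j := hall x (hsub hx)
      have hwnj : w ∉ Z j := by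
        intro hwj
        obtain ⟨i, -, hun⟩ := hpart t' ht'D w hwt'
        exact hkj ((hun k hwZ).trans (hun j hwj).symm)
      exact ⟨⟨x, hx⟩, t', ht'D, hcard', ⟨x, hsub' hx, hxZj⟩, ⟨w, hwt', hwnj⟩, hsub'⟩
  · intro h j hj
    obtain ⟨hne, t, htD, hcard, hv, -, hsub⟩ := h j hj
    exact ⟨hne, t, htD, hcard, hv, hsub⟩
end

section
/- Let f: V → W be a persistence morphism between tame persistence modules with barcode bases A = {α_i ∼ [a_i, b_i)} and B = {β_j ∼ [c_j, d_j)}, and let F = (k_{α,β}) be the matrix associated to f in these bases. If k_{α_i, β_j} ≠ 0, then c_j ≤ a_i ≤ d_j ≤ b_i. -/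
noncomputable section

/-- A persistence module over `ℤ/2`. -/
structure PersMod where
  V : ℝ → Type
  [grp : ∀ t, AddCommGroup (V t)]
  [mod : ∀ t, Module (ZMod 2) (V t)]
  ρ : ∀ s t : ℝ, s ≤ t → V s →ₗ[ZMod 2] V t
  ρ_id : ∀ (t : ℝ) (h : t ≤ t) (x : V t), ρ t t h x = x
  ρ_comp : ∀ (r s t : ℝ) (h1 : r ≤ s) (h2 : s ≤ t) (x : V r),
    ρ s t h2 (ρ r s h1 x) = ρ r t (h1.trans h2) x

attribute [instance] PersMod.grp PersMod.mod

/-- A persistence morphism: a family of linear maps commuting with the structure maps. -/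
structure PersHom (M N : PersMod) where
  map : ∀ t : ℝ, M.V t →ₗ[ZMod 2] N.V t
  comm : ∀ (s t : ℝ) (h : s ≤ t) (x : M.V s), map t (M.ρ s t h x) = N.ρ s t h (map s x)

/-- A barcode basis of the persistence module `M` with intervals `[a i, b i)`, `i : Fin N`:
for each generator a compatible family of vectors living on its interval and dying past it,
whose alive members form a basis of `M.V t` at every `t`. -/
structure BarcodeBasis (M : PersMod) (N : ℕ) (a b : Fin N → ℝ) where
  vec : ∀ (i : Fin N) (t : ℝ), a i ≤ t → t < b i → M.V t
  compat : ∀ (i : Fin N) (s t : ℝ) (hs : a i ≤ s) (h : s ≤ t) (ht : t < b i),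
    M.ρ s t h (vec i s hs (lt_of_le_of_lt h ht)) = vec i t (hs.trans h) ht
  dies : ∀ (i : Fin N) (s : ℝ) (hs : a i ≤ s) (hs' : s < b i) (t : ℝ) (h : s ≤ t),
    b i ≤ t → M.ρ s t h (vec i s hs hs') = 0
  indep : ∀ t : ℝ, LinearIndependent (ZMod 2)
    (fun i : {i : Fin N // a i ≤ t ∧ t < b i} => vec i.1 t i.2.1 i.2.2)
  spans : ∀ t : ℝ, Submodule.span (ZMod 2)
    (Set.range (fun i : {i : Fin N // a i ≤ t ∧ t < b i} => vec i.1 t i.2.1 i.2.2)) = ⊤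

section Aux
variable {M' : PersMod} {N' : ℕ} {c d : Fin N' → ℝ}

lemma coeff_eq (B : BarcodeBasis M' N' c d) (t : ℝ) (g h : Fin N' → ZMod 2)
    (hsum : ∑ j : Fin N', (if hj : c j ≤ t ∧ t < d j then g j • B.vec j t hj.1 hj.2 else 0)
          = ∑ j : Fin N', (if hj : c j ≤ t ∧ t < d j then h j • B.vec j t hj.1 hj.2 else 0))
    (j : Fin N') (hj : c j ≤ t ∧ t < d j) : g j = h j := by
  classical
  set w : Fin N' → M'.V t :=
    fun j => if hj : c j ≤ t ∧ t < d j then B.vec j t hj.1 hj.2 else 0 with hw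
  have hterm : ∀ (k : Fin N' → ZMod 2) (j : Fin N'),
      (if hj : c j ≤ t ∧ t < d j then k j • B.vec j t hj.1 hj.2 else 0) = k j • w j := by
    intro k j
    by_cases hj : c j ≤ t ∧ t < d j <;> simp [hw, hj]
  have hsum' : ∑ j : Fin N', (g j - h j) • w j = 0 := by
    simp only [sub_smul, Finset.sum_sub_distrib]
    rw [← Finset.sum_congr rfl (fun j _ => hterm g j),
        ← Finset.sum_congr rfl (fun j _ => hterm h j), hsum, sub_self]
  have hsub : ∑ j' : {j : Fin N' // c j ≤ t ∧ t < d j},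
      (g j'.1 - h j'.1) • B.vec j'.1 t j'.2.1 j'.2.2 = 0 := by
    have e1 : ∑ j' : {j : Fin N' // c j ≤ t ∧ t < d j},
        (g j'.1 - h j'.1) • B.vec j'.1 t j'.2.1 j'.2.2
        = ∑ j' : {j : Fin N' // c j ≤ t ∧ t < d j}, (g j'.1 - h j'.1) • w j'.1 := by
      refine Finset.sum_congr rfl fun j' _ => ?_
      rw [hw]
      simp only [dif_pos j'.2]
    have e2 : ∑ j'' ∈ Finset.univ.filter (fun j : Fin N' => c j ≤ t ∧ t < d j),
        (g j'' - h j'') • w j''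
        = ∑ j' : {j : Fin N' // c j ≤ t ∧ t < d j}, (g j'.1 - h j'.1) • w j'.1 :=
      Finset.sum_subtype _ (fun x => by simp) _
    have e3 : ∑ j'' ∈ Finset.univ.filter (fun j : Fin N' => c j ≤ t ∧ t < d j),
        (g j'' - h j'') • w j'' = ∑ j'' : Fin N', (g j'' - h j'') • w j'' := by
      refine Finset.sum_subset (Finset.subset_univ _) fun x _ hx => ?_
      simp only [Finset.mem_filter, Finset.mem_univ, true_and] at hx
      rw [hw]
      simp [dif_neg hx]
    rw [e1, ← e2, e3, hsum']
  have := Fintype.linearIndependent_iff.mp (B.indep t)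
    (fun j' => g j'.1 - h j'.1) hsub ⟨j, hj⟩
  exact sub_eq_zero.mp this

lemma push_sum (B : BarcodeBasis M' N' c d) (k : Fin N' → ZMod 2) {t s : ℝ} (hts : t ≤ s) :
    M'.ρ t s hts (∑ j : Fin N', if hj : c j ≤ t ∧ t < d j then k j • B.vec j t hj.1 hj.2 else 0)
    = ∑ j : Fin N', if hj : c j ≤ s ∧ s < d j then
        (if c j ≤ t ∧ t < d j then k j else 0) • B.vec j s hj.1 hj.2 else 0 := by
  classical
  rw [map_sum]
  refine Finset.sum_congr rfl fun j _ => ?_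
  by_cases ht : c j ≤ t ∧ t < d j
  · rw [dif_pos ht, map_smul]
    by_cases hs : s < d j
    · rw [dif_pos ⟨ht.1.trans hts, hs⟩, if_pos ht, B.compat j t s ht.1 hts hs]
    · push_neg at hs
      rw [B.dies j t ht.1 ht.2 s hts hs, smul_zero,
        dif_neg (fun hh : c j ≤ s ∧ s < d j => absurd hh.2 (not_lt.mpr hs))]
  · rw [dif_neg ht, map_zero]
    by_cases hs : c j ≤ s ∧ s < d j
    · rw [dif_pos hs, if_neg ht, zero_smul]
    · rw [dif_neg hs]

end Aux

/-- If `F = (k_{α,β})` is the matrix associated to a persistence morphism `f : V → W` in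
barcode bases `A = {α_i ∼ [a_i, b_i)}` of `V` and `B = {β_j ∼ [c_j, d_j)}` of `W` --- that
is, at each parameter `t ∈ [a_i, b_i)` we have `f_t(α_i(t)) = ∑_j k_{α_i,β_j} β_j(t)` (sum
over the generators alive at `t`), and nonzero entries correspond to generators actually
appearing in the barcode-sum expression of `f(α_i)` (their intervals meet `[a_i, b_i)`) ---
then `k_{α_i, β_j} ≠ 0` implies `c_j ≤ a_i ≤ d_j ≤ b_i`. -/

theorem associated_matrix_interval_inequalities
    (M M' : PersMod) (N N' : ℕ) (a b : Fin N → ℝ) (c d : Fin N' → ℝ)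
    (A : BarcodeBasis M N a b) (B : BarcodeBasis M' N' c d)
    (f : PersHom M M') (F : Fin N' → Fin N → ZMod 2)
    (hF : ∀ (i : Fin N) (t : ℝ) (h1 : a i ≤ t) (h2 : t < b i),
      f.map t (A.vec i t h1 h2) =
        ∑ j : Fin N', if h : c j ≤ t ∧ t < d j then F j i • B.vec j t h.1 h.2 else 0)
    (hsupp : ∀ (i : Fin N) (j : Fin N'), F j i ≠ 0 →
      ∃ t : ℝ, a i ≤ t ∧ t < b i ∧ c j ≤ t ∧ t < d j)
    (i : Fin N) (j : Fin N') (hne : F j i ≠ 0) :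
    c j ≤ a i ∧ a i ≤ d j ∧ d j ≤ b i := by
  classical
  obtain ⟨t, hat, htb, hct, htd⟩ := hsupp i j hne
  have hab : a i < b i := lt_of_le_of_lt hat htb
  refine ⟨?_, hat.trans htd.le, ?_⟩
  · by_contra hcon
    push_neg at hcon
    have key : M'.ρ (a i) t hat (f.map (a i) (A.vec i (a i) le_rfl hab))
        = f.map t (A.vec i t hat htb) := by
      rw [← f.comm (a i) t hat, A.compat i (a i) t le_rfl hat htb]
    rw [hF i (a i) le_rfl hab, push_sum B _ hat, hF i t hat htb] at key
    have hco := coeff_eq B t _ _ key j ⟨hct, htd⟩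
    rw [if_neg (fun hc : c j ≤ a i ∧ a i < d j => absurd hc.1 (not_le.mpr hcon))] at hco
    exact hne hco.symm
  · by_contra hcon
    push_neg at hcon
    have key : M'.ρ t (b i) htb.le (f.map t (A.vec i t hat htb)) = 0 := by
      rw [← f.comm, A.dies i t hat htb (b i) htb.le le_rfl, map_zero]
    rw [hF i t hat htb, push_sum B _ htb.le] at key
    have key2 : ∑ j' : Fin N', (if hj : c j' ≤ b i ∧ b i < d j' then
          (if c j' ≤ t ∧ t < d j' then F j' i else 0) • B.vec j' (b i) hj.1 hj.2 else 0)
        = ∑ j' : Fin N', (if hj : c j' ≤ b i ∧ b i < d j' then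
          (0 : ZMod 2) • B.vec j' (b i) hj.1 hj.2 else 0) := by
      rw [key]
      symm
      refine Finset.sum_eq_zero fun j' _ => ?_
      split <;> simp
    have hco := coeff_eq B (b i) _ _ key2 j ⟨hct.trans htb.le, hcon⟩
    rw [if_pos ⟨hct, htd⟩] at hco
    exact hne hco
end
end

section
/- Let V and W be tame persistence modules with barcode bases A (sorted in standard order) and B (sorted in endpoint order), let f: V → W be a persistence morphism with associated matrix F, and let R be a Gaussian column reduction of F. Then the set { 1_{a_i}( ⊞_{j : R_{j,i} ≠ 0} R_{j,i} β_j ) : i = 1,...,N } is a barcode basis for the image f(V); moreover, the interval of the i-th basis element is [a_i, d_{p(i)}), where p(i) is the pivot row of column i and d_{p(i)} the death value of β_{p(i)} (the interval is empty if column i reduces to zero). -/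
noncomputable section

/-- Standard order: births increase, and for equal births deaths decrease. -/
def StdOrder {N : ℕ} (a b : Fin N → ℝ) : Prop :=
  ∀ i j : Fin N, i < j → a i < a j ∨ (a i = a j ∧ b j ≤ b i)

/-- Endpoint order: deaths increase, and for equal deaths births increase. -/
def EndOrder {N : ℕ} (c d : Fin N → ℝ) : Prop :=
  ∀ i j : Fin N, i < j → d i < d j ∨ (d i = d j ∧ c i ≤ c j)

/-- The persistence vector `⊞_j col(j) • β_j` evaluated at time `t` (sum over the
generators of the barcode basis `B` alive at `t`). -/
def colVec (M' : PersMod) (N' : ℕ) (c d : Fin N' → ℝ) (B : BarcodeBasis M' N' c d)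
    (col : Fin N' → ZMod 2) (t : ℝ) : M'.V t :=
  ∑ j : Fin N', if h : c j ≤ t ∧ t < d j then col j • B.vec j t h.1 h.2 else 0


theorem sum_dite_subtype {n : ℕ} {M : Type*} [AddCommMonoid M] (P : Fin n → Prop) [DecidablePred P]
    (v : ∀ j, P j → M) :
    ∑ j, (if h : P j then v j h else 0) = ∑ j : {j // P j}, v j.1 j.2 := by
  rw [← Finset.sum_filter_of_ne (p := P) (fun x _ hx => by by_contra h; simp [h] at hx),
    Finset.sum_subtype (p := P) (Finset.univ.filter P) (fun x => by simp)
      (fun j => if h : P j then v j h else 0)]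
  exact Finset.sum_congr rfl fun j _ => dif_pos j.2

theorem colVec_eq (M' : PersMod) (N' : ℕ) (c d : Fin N' → ℝ) (B : BarcodeBasis M' N' c d)
    (col : Fin N' → ZMod 2) (t : ℝ) [∀ j : Fin N', Decidable (c j ≤ t ∧ t < d j)] :
    colVec M' N' c d B col t
      = ∑ j : Fin N', col j • (if h : c j ≤ t ∧ t < d j then B.vec j t h.1 h.2 else 0) := by
  unfold colVec
  refine Finset.sum_congr rfl fun j _ => ?_
  split <;> simp

theorem colVec_lin (M' : PersMod) (N' : ℕ) (c d : Fin N' → ℝ) (B : BarcodeBasis M' N' c d)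
    (t : ℝ) {ι : Type*} [Fintype ι] (g : ι → ZMod 2) (cols : ι → Fin N' → ZMod 2) :
    colVec M' N' c d B (fun j => ∑ k, g k * cols k j) t
      = ∑ k, g k • colVec M' N' c d B (cols k) t := by
  classical
  simp only [colVec_eq, Finset.sum_smul, mul_smul, Finset.smul_sum]
  exact Finset.sum_comm

theorem colVec_dead (M' : PersMod) (N' : ℕ) (c d : Fin N' → ℝ) (B : BarcodeBasis M' N' c d)
    (col : Fin N' → ZMod 2) (t : ℝ)
    (h : ∀ j, col j ≠ 0 → ¬(c j ≤ t ∧ t < d j)) :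
    colVec M' N' c d B col t = 0 := by
  classical
  refine Finset.sum_eq_zero fun j _ => ?_
  by_cases hc : col j = 0
  · split <;> simp [hc]
  · rw [dif_neg (h j hc)]

/-- Let `f : V → W` be a persistence morphism, `A` a barcode basis of `V` in standard order
and `B` a barcode basis of `W` in endpoint order, `F` the matrix associated to `f`, and `R`
a Gaussian column reduction of `F` (i.e. `R = F · U` with `U` invertible upper triangular
with unit diagonal, and the pivot rows `p i` of the nonzero columns are distinct).  Then
the persistence vectors `1_{a_i}(⊞_j R_{j,i} β_j)` over the nonzero columns `i` form a
barcode basis of the image `f(V)`, the `i`-th generator having interval `[a_i, d_{p(i)})`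
(empty when column `i` reduces to zero): they lie in the image, are compatible with the
structure maps, die at `d_{p(i)}`, and those alive at `t` form a basis of `im f_t` for
every `t`. -/
theorem image_barcode_basis_of_column_reduction
    (M M' : PersMod) (N N' : ℕ) (a b : Fin N → ℝ) (c d : Fin N' → ℝ)
    (A : BarcodeBasis M N a b) (B : BarcodeBasis M' N' c d)
    (hstd : StdOrder a b) (hend : EndOrder c d)
    (f : PersHom M M') (F R : Matrix (Fin N') (Fin N) (ZMod 2))
    (hF : ∀ (i : Fin N) (t : ℝ) (h1 : a i ≤ t) (h2 : t < b i),
      f.map t (A.vec i t h1 h2) =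
        ∑ j : Fin N', if h : c j ≤ t ∧ t < d j then F j i • B.vec j t h.1 h.2 else 0)
    (hFmat : ∀ (i : Fin N) (j : Fin N'), F j i ≠ 0 → c j ≤ a i ∧ a i ≤ d j ∧ d j ≤ b i)
    (U : Matrix (Fin N) (Fin N) (ZMod 2))
    (hUdiag : ∀ i : Fin N, U i i = 1)
    (hUtri : ∀ i j : Fin N, j < i → U i j = 0)
    (hR : R = F * U)
    (p : Fin N → Fin N')
    (hpivot : ∀ i : Fin N, (∃ j, R j i ≠ 0) →
      R (p i) i ≠ 0 ∧ ∀ j : Fin N', p i < j → R j i = 0)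
    (hreduced : ∀ i i' : Fin N, (∃ j, R j i ≠ 0) → (∃ j, R j i' ≠ 0) →
      p i = p i' → i = i') :
    (∀ (i : Fin N) (t : ℝ), a i ≤ t → t < d (p i) →
      colVec M' N' c d B (fun j => R j i) t ∈ LinearMap.range (f.map t)) ∧
    (∀ (i : Fin N) (s t : ℝ) (h : s ≤ t), a i ≤ s → t < d (p i) →
      M'.ρ s t h (colVec M' N' c d B (fun j => R j i) s)
        = colVec M' N' c d B (fun j => R j i) t) ∧
    (∀ (i : Fin N) (s t : ℝ) (h : s ≤ t), a i ≤ s → s < d (p i) → d (p i) ≤ t →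
      M'.ρ s t h (colVec M' N' c d B (fun j => R j i) s) = 0) ∧
    (∀ t : ℝ,
      LinearIndependent (ZMod 2)
        (fun i : {i : Fin N // (∃ j, R j i ≠ 0) ∧ a i ≤ t ∧ t < d (p i)} =>
          colVec M' N' c d B (fun j => R j i.1) t) ∧
      Submodule.span (ZMod 2)
        (Set.range (fun i : {i : Fin N // (∃ j, R j i ≠ 0) ∧ a i ≤ t ∧ t < d (p i)} =>
          colVec M' N' c d B (fun j => R j i.1) t))
        = LinearMap.range (f.map t)) := by
  classical
  -- monotonicity of births along the standard order
  have ha_mono : ∀ k i : Fin N, k ≤ i → a k ≤ a i := by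
    intro k i h
    rcases eq_or_lt_of_le h with h' | h'
    · rw [h']
    · rcases hstd k i h' with h'' | h''
      · exact h''.le
      · exact h''.1.le
  have hd_mono : ∀ j j' : Fin N', j ≤ j' → d j ≤ d j' := by
    intro j j' h
    rcases eq_or_lt_of_le h with h' | h'
    · rw [h']
    · rcases hend j j' h' with h'' | h''
      · exact h''.le
      · exact h''.1.le
  -- upper triangularity of U: nonzero entry means row index ≤ column index
  have hUle : ∀ k i : Fin N, U k i ≠ 0 → k ≤ i := by
    intro k i h
    by_contra hlt
    exact h (hUtri k i (lt_of_not_ge hlt))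
  -- nonzero entries of R start before the birth of the column
  have hRentry : ∀ (i : Fin N) (j : Fin N'), R j i ≠ 0 → c j ≤ a i := by
    intro i j h
    rw [hR, Matrix.mul_apply] at h
    obtain ⟨k, -, hk⟩ := Finset.exists_ne_zero_of_sum_ne_zero h
    rcases mul_ne_zero_iff.1 hk with ⟨hFk, hUk⟩
    exact (hFmat k j hFk).1.trans (ha_mono k i (hUle k i hUk))
  -- nonzero entries of R are at rows ≤ pivot (for nonzero columns)
  have hRple : ∀ (i : Fin N) (j : Fin N'), R j i ≠ 0 → j ≤ p i := by
    intro i j h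
    by_contra hlt
    exact h ((hpivot i ⟨j, h⟩).2 j (lt_of_not_ge hlt))
  -- the column vectors lie in the image of f
  have himg : ∀ (i : Fin N) (t : ℝ), a i ≤ t →
      colVec M' N' c d B (fun j => R j i) t ∈ LinearMap.range (f.map t) := by
    intro i t hat
    refine ⟨∑ k : Fin N, if h : a k ≤ t ∧ t < b k then U k i • A.vec k t h.1 h.2 else 0, ?_⟩
    rw [map_sum]
    have step1 : ∀ k : Fin N,
        f.map t (if h : a k ≤ t ∧ t < b k then U k i • A.vec k t h.1 h.2 else 0)
          = ∑ j : Fin N', ((if a k ≤ t ∧ t < b k then U k i else 0) * F j k) •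
              (if h : c j ≤ t ∧ t < d j then B.vec j t h.1 h.2 else 0) := by
      intro k
      by_cases h : a k ≤ t ∧ t < b k
      · rw [dif_pos h, if_pos h, map_smul, hF k t h.1 h.2, Finset.smul_sum]
        refine Finset.sum_congr rfl fun j _ => ?_
        by_cases hj : c j ≤ t ∧ t < d j
        · rw [dif_pos hj, dif_pos hj, smul_smul]
        · simp [dif_neg hj]
      · simp [dif_neg h, if_neg h]
    simp only [step1]
    rw [Finset.sum_comm]
    unfold colVec
    refine Finset.sum_congr rfl fun j _ => ?_
    rw [← Finset.sum_smul]
    by_cases hj : c j ≤ t ∧ t < d j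
    · rw [dif_pos hj]
      have hsum : (∑ k : Fin N, (if a k ≤ t ∧ t < b k then U k i else 0) * F j k) = R j i := by
        rw [hR, Matrix.mul_apply]
        refine Finset.sum_congr rfl fun k _ => ?_
        by_cases h : a k ≤ t ∧ t < b k
        · rw [if_pos h, mul_comm]
        · rw [if_neg h, zero_mul]
          by_cases hU : U k i = 0
          · rw [hU, mul_zero]
          · by_cases hFk : F j k = 0
            · rw [hFk, zero_mul]
            · exfalso
              have hak : a k ≤ t := (ha_mono k i (hUle k i hU)).trans hat
              have hbk : b k ≤ t := le_of_not_gt (fun h' => h ⟨hak, h'⟩)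
              exact absurd hj.2 (not_lt.2 ((hFmat k j hFk).2.2.trans hbk))
      rw [hsum, dif_pos hj]
    · simp [dif_neg hj]
  -- compatibility with structure maps
  have hcompat : ∀ (i : Fin N) (s t : ℝ) (h : s ≤ t), a i ≤ s →
      M'.ρ s t h (colVec M' N' c d B (fun j => R j i) s)
        = colVec M' N' c d B (fun j => R j i) t := by
    intro i s t h has
    unfold colVec
    rw [map_sum]
    refine Finset.sum_congr rfl fun j _ => ?_
    by_cases hcol : R j i = 0
    · split <;> split <;> simp [hcol]
    · have hcj : c j ≤ s := (hRentry i j hcol).trans has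
      by_cases hdt : t < d j
      · have hds : s < d j := lt_of_le_of_lt h hdt
        rw [dif_pos ⟨hcj, hds⟩, dif_pos ⟨hcj.trans h, hdt⟩, map_smul, B.compat j s t hcj h hdt]
      · rw [dif_neg (show ¬(c j ≤ t ∧ t < d j) from fun h' => hdt h'.2)]
        by_cases hds : s < d j
        · rw [dif_pos ⟨hcj, hds⟩, map_smul, B.dies j s hcj hds t h (le_of_not_gt hdt), smul_zero]
        · rw [dif_neg (show ¬(c j ≤ s ∧ s < d j) from fun h' => hds h'.2), map_zero]
  -- death of the column vectors
  have hdies : ∀ (i : Fin N) (s t : ℝ) (h : s ≤ t), a i ≤ s → d (p i) ≤ t →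
      M'.ρ s t h (colVec M' N' c d B (fun j => R j i) s) = 0 := by
    intro i s t h has hdt
    unfold colVec
    rw [map_sum]
    refine Finset.sum_eq_zero fun j _ => ?_
    by_cases hcol : R j i = 0
    · split <;> simp [hcol]
    · have hdj : d j ≤ t := (hd_mono j (p i) (hRple i j hcol)).trans hdt
      by_cases hds : c j ≤ s ∧ s < d j
      · rw [dif_pos hds, map_smul, B.dies j s hds.1 hds.2 t h hdj, smul_zero]
      · rw [dif_neg hds, map_zero]
  -- vanishing of the column vector past the pivot's death
  have hvanish : ∀ (k : Fin N) (t : ℝ), d (p k) ≤ t →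
      colVec M' N' c d B (fun j => R j k) t = 0 := by
    intro k t hdt
    refine colVec_dead M' N' c d B _ t fun j hj hal => ?_
    exact absurd hal.2 (not_lt.2 ((hd_mono j (p k) (hRple k j hj)).trans hdt))
  -- inverse of U
  have hUtri' : U.BlockTriangular id := fun i j hij => hUtri i j hij
  have hdet : IsUnit U.det := by
    rw [Matrix.det_of_upperTriangular hUtri']
    simp [hUdiag]
  haveI : Invertible U := U.invertibleOfIsUnitDet hdet
  have hUinvle : ∀ k i : Fin N, U⁻¹ k i ≠ 0 → k ≤ i := by
    intro k i h
    by_contra hlt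
    exact h (Matrix.blockTriangular_inv_of_blockTriangular hUtri' (lt_of_not_ge hlt))
  have hFRU : ∀ (j : Fin N') (i : Fin N), F j i = ∑ k, U⁻¹ k i * R j k := by
    intro j i
    have hFeq : F = R * U⁻¹ := by
      rw [hR, Matrix.mul_assoc, Matrix.mul_nonsing_inv U hdet, Matrix.mul_one]
    conv_lhs => rw [hFeq]
    rw [Matrix.mul_apply]
    exact Finset.sum_congr rfl fun k _ => mul_comm _ _
  refine ⟨fun i t hat _ => himg i t hat,
    fun i s t h has _ => hcompat i s t h has,
    fun i s t h has _ hdt => hdies i s t h has hdt,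
    fun t => ?_⟩
  constructor
  · -- linear independence
    rw [Fintype.linearIndependent_iff]
    intro g hg
    have hexp : ∑ j : {j : Fin N' // c j ≤ t ∧ t < d j},
        (∑ i : {i : Fin N // (∃ j, R j i ≠ 0) ∧ a i ≤ t ∧ t < d (p i)}, g i * R j.1 i.1) •
          B.vec j.1 t j.2.1 j.2.2 = 0 := by
      have hstep : ∑ j : {j : Fin N' // c j ≤ t ∧ t < d j},
          (∑ i : {i : Fin N // (∃ j, R j i ≠ 0) ∧ a i ≤ t ∧ t < d (p i)}, g i * R j.1 i.1) •
            B.vec j.1 t j.2.1 j.2.2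
          = colVec M' N' c d B
              (fun j => ∑ i : {i : Fin N // (∃ j, R j i ≠ 0) ∧ a i ≤ t ∧ t < d (p i)},
                g i * R j i.1) t := by
        rw [← sum_dite_subtype (fun j => c j ≤ t ∧ t < d j)
          (fun j h => (∑ i : {i : Fin N // (∃ j, R j i ≠ 0) ∧ a i ≤ t ∧ t < d (p i)},
            g i * R j i.1) • B.vec j t h.1 h.2), colVec_eq]
        refine Finset.sum_congr rfl fun j _ => ?_
        split <;> simp
      rw [hstep, colVec_lin M' N' c d B t g (fun i j => R j i.1)]
      exact hg
    have key := Fintype.linearIndependent_iff.1 (B.indep t) _ hexp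
    intro i
    by_contra hgi
    set T := Finset.univ.filter
      (fun i : {i : Fin N // (∃ j, R j i ≠ 0) ∧ a i ≤ t ∧ t < d (p i)} => g i ≠ 0) with hT
    have hTne : T.Nonempty := ⟨i, by simp [hT, hgi]⟩
    obtain ⟨i0, hi0, hmax⟩ := T.exists_max_image (fun i => p i.1) hTne
    have hj0 : c (p i0.1) ≤ t ∧ t < d (p i0.1) :=
      ⟨(hRentry i0.1 (p i0.1) (hpivot i0.1 i0.2.1).1).trans i0.2.2.1, i0.2.2.2⟩
    have h0 := key ⟨p i0.1, hj0⟩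
    rw [← Finset.sum_filter_of_ne (p := fun i' => g i' ≠ 0)
      (fun i' _ hne => by intro hgz; rw [hgz, zero_mul] at hne; exact hne rfl)] at h0
    rw [Finset.sum_eq_single i0 (fun i' hi' hne => ?_) (fun habs => absurd hi0 habs)] at h0
    · have hg0 : g i0 ≠ 0 := by simpa [hT] using hi0
      exact mul_ne_zero hg0 (hpivot i0.1 i0.2.1).1 h0
    · have hple : p i'.1 ≤ p i0.1 := hmax i' hi'
      have hpne : p i'.1 ≠ p i0.1 := fun hpe =>
        (fun h => hne (Subtype.ext h)) (hreduced i'.1 i0.1 i'.2.1 i0.2.1 hpe)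
      rw [(hpivot i'.1 i'.2.1).2 (p i0.1) (lt_of_le_of_ne hple hpne), mul_zero]
  · -- spanning
    refine le_antisymm (Submodule.span_le.2 ?_) ?_
    · rintro _ ⟨i, rfl⟩
      exact himg i.1 t i.2.2.1
    · rw [LinearMap.range_eq_map, ← A.spans t, Submodule.map_span]
      refine Submodule.span_le.2 ?_
      rintro _ ⟨_, ⟨i, rfl⟩, rfl⟩
      have hcv : f.map t (A.vec i.1 t i.2.1 i.2.2)
          = colVec M' N' c d B (fun j => F j i.1) t := hF i.1 t i.2.1 i.2.2
      simp only [Function.comp]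
      rw [hcv]
      have hfun : (fun j => F j i.1) = fun j => ∑ k, U⁻¹ k i.1 * R j k :=
        funext fun j => hFRU j i.1
      rw [hfun, colVec_lin M' N' c d B t (fun k => U⁻¹ k i.1) (fun k j => R j k)]
      refine Submodule.sum_mem _ fun k _ => ?_
      by_cases hUk : U⁻¹ k i.1 = 0
      · simp [hUk]
      · refine Submodule.smul_mem _ _ ?_
        have hak : a k ≤ t := (ha_mono k i.1 (hUinvle k i.1 hUk)).trans i.2.1
        by_cases hcol : ∃ j, R j k ≠ 0
        · by_cases hdk : t < d (p k)
          · exact Submodule.subset_span ⟨⟨k, hcol, hak, hdk⟩, rfl⟩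
          · rw [hvanish k t (le_of_not_gt hdk)]
            exact Submodule.zero_mem _
        · push_neg at hcol
          rw [colVec_dead M' N' c d B _ t (fun j hj _ => hj (hcol j))]
          exact Submodule.zero_mem _
end
end

section
/- For the Mayer–Vietoris double complex of a 2-dimensional alpha complex A(X) with grid cover U, the terms C_{p,q}(A(X),U) vanish for all q ≥ 3, and also vanish whenever q ≥ 1 and p + q ≥ 5. -/
/-- Counting lemma: if every zone index `j ∈ J` has a witness vertex in a fixed finset `S`
that lies in some simplex of `D` (hence lies in a unique zone), then `#J ≤ #S`. -/
lemma count_zones {V : Type*} {M : ℕ} (D : Finset (Finset V)) (Z : Fin M → Finset V)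
    (hpart : ∀ t ∈ D, ∀ v ∈ t, ∃! i : Fin M, v ∈ Z i)
    (J : Finset (Fin M)) (S : Finset V)
    (h : ∀ j ∈ J, ∃ v, v ∈ S ∧ v ∈ Z j ∧ ∃ t ∈ D, v ∈ t) : J.card ≤ S.card := by
  classical
  rcases J.eq_empty_or_nonempty with rfl | ⟨j₀, hj₀⟩
  · simp
  have hV : Nonempty V := ⟨(h j₀ hj₀).choose⟩
  choose v hvS hvZ t htD hvt using h
  refine Finset.card_le_card_of_injOn
    (fun j => if hj : j ∈ J then v j hj else Classical.arbitrary V) ?_ ?_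
  · intro j hj; simp only [Finset.mem_coe] at hj ⊢; simp only [dif_pos hj]; exact hvS j hj
  · intro j hj j' hj' heq
    simp only [Finset.mem_coe] at hj hj'
    simp only [dif_pos hj, dif_pos hj'] at heq
    obtain ⟨i, _, huniq⟩ := hpart (t j hj) (htD j hj) (v j hj) (hvt j hj)
    have h1 := huniq j (hvZ j hj)
    have h2 := huniq j' (heq ▸ hvZ j' hj')
    rw [← h1] at h2; exact h2.symm

/-- Vanishing of the terms of the Mayer–Vietoris double complex
`C_{p,q}(A(X),U) = ⊕_{σ ∈ N(U)^p} σ ⊗ C_q(A(σ))` of a 2-dimensional alpha complex with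
grid cover: `C_{p,q} = 0` for `q ≥ 3`, and for `q ≥ 1` with `p + q ≥ 5`.  Stated
combinatorially: any intersection `A(σ) = ⋂_{j ∈ J} A_j` over a `p`-simplex `σ` of the
nerve (so `#J = p+1`) contains no `q`-simplex (no set of `q+1` vertices) for such `(p,q)`.
The cover elements `A_i ⊆ K_i` are subcomplexes of the grid cover of the Delaunay
triangulation `D`, whose zones partition the vertices, each simplex of `D` has at most
three vertices, and each edge is a face of at most two triangles. -/
theorem double_complex_terms_vanish {V : Type*} {M : ℕ}
    (D : Finset (Finset V)) (Z : Fin M → Finset V)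
    (hpart : ∀ t ∈ D, ∀ v ∈ t, ∃! i : Fin M, v ∈ Z i)
    (hdim : ∀ σ ∈ D, σ.card ≤ 3)
    (hplanar : ∀ e : Finset V, e.card = 2 →
      ∀ t₁ t₂ t₃ : Finset V,
        (t₁ ∈ D ∧ t₁.card = 3 ∧ e ⊆ t₁) →
        (t₂ ∈ D ∧ t₂.card = 3 ∧ e ⊆ t₂) →
        (t₃ ∈ D ∧ t₃.card = 3 ∧ e ⊆ t₃) →
        t₁ = t₂ ∨ t₁ = t₃ ∨ t₂ = t₃)
    (A : Fin M → Set (Finset V)) (hA : ∀ i, A i ⊆ KCov D Z i) :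
    ∀ p q : ℕ, (3 ≤ q ∨ (1 ≤ q ∧ 5 ≤ p + q)) →
      ∀ J : Finset (Fin M), J.card = p + 1 →
        ∀ τ : Finset V, (∀ j ∈ J, τ ∈ A j) → τ.card ≠ q + 1 := by
  classical
  intro p q hq J hJ τ hτ hcard
  have hJne : J.Nonempty := Finset.card_pos.mp (by omega)
  obtain ⟨j₀, hj₀⟩ := hJne
  have hT : ∀ j ∈ J, ∃ t, t ∈ D ∧ t.card = 3 ∧ (∃ v ∈ t, v ∈ Z j) ∧ τ ⊆ t :=
    fun j hj => (hA j (hτ j hj)).2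
  choose t htD ht3 htv htsub using hT
  have hτ3 : τ.card ≤ 3 := by
    have := Finset.card_le_card (htsub j₀ hj₀)
    have := ht3 j₀ hj₀
    omega
  rcases hq with hq3 | ⟨hq1, hpq⟩
  · omega
  -- now q = 1 or q = 2
  have hq2 : q ≤ 2 := by omega
  interval_cases q
  · -- q = 1 : τ.card = 2, J.card ≥ 5
    have hJ5 : 5 ≤ J.card := by omega
    by_cases hex : ∃ j, ∃ hj : j ∈ J, t j hj ≠ t j₀ hj₀
    · obtain ⟨j₁, hj₁, hne⟩ := hex
      set S := t j₀ hj₀ ∪ t j₁ hj₁ with hS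
      have hS4 : S.card ≤ 4 := by
        have hcup := Finset.card_union_add_card_inter (t j₀ hj₀) (t j₁ hj₁)
        rw [← hS] at hcup
        have hτsub : τ ⊆ t j₀ hj₀ ∩ t j₁ hj₁ :=
          Finset.subset_inter (htsub j₀ hj₀) (htsub j₁ hj₁)
        have := Finset.card_le_card hτsub
        have := ht3 j₀ hj₀
        have := ht3 j₁ hj₁
        omega
      have hcount : J.card ≤ S.card := by
        refine count_zones D Z hpart J S ?_
        intro j hj
        obtain ⟨v, hvt, hvZ⟩ := htv j hj
        refine ⟨v, ?_, hvZ, t j hj, htD j hj, hvt⟩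
        have := hplanar τ hcard (t j₀ hj₀) (t j₁ hj₁) (t j hj)
          ⟨htD j₀ hj₀, ht3 j₀ hj₀, htsub j₀ hj₀⟩
          ⟨htD j₁ hj₁, ht3 j₁ hj₁, htsub j₁ hj₁⟩
          ⟨htD j hj, ht3 j hj, htsub j hj⟩
        rcases this with h | h | h
        · exact absurd h.symm hne
        · exact Finset.mem_union_left _ (h ▸ hvt)
        · exact Finset.mem_union_right _ (h ▸ hvt)
      omega
    · push_neg at hex
      have hcount : J.card ≤ (t j₀ hj₀).card := by
        refine count_zones D Z hpart J _ ?_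
        intro j hj
        obtain ⟨v, hvt, hvZ⟩ := htv j hj
        exact ⟨v, hex j hj ▸ hvt, hvZ, t j hj, htD j hj, hvt⟩
      have := ht3 j₀ hj₀
      omega
  · -- q = 2 : τ.card = 3, J.card ≥ 4
    have hJ4 : 4 ≤ J.card := by omega
    have hcount : J.card ≤ τ.card := by
      refine count_zones D Z hpart J τ ?_
      intro j hj
      have heq : t j hj = τ := Eq.symm <|
        Finset.eq_of_subset_of_card_le (htsub j hj) (by rw [hcard]; exact ht3 j hj ▸ le_refl 3)
      obtain ⟨v, hvt, hvZ⟩ := htv j hj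
      exact ⟨v, heq ▸ hvt, hvZ, t j hj, htD j hj, hvt⟩
    omega
end

section
/- In the persistence Mayer–Vietoris spectral sequence of a 2-dimensional alpha complex A(X) with grid cover U, the first-page terms E^1_{p,q} = ⊕_{σ∈N(U)^p} σ ⊗ PH_q(A(σ)) vanish for all q ≥ 2, the second-page differentials d^2_{p,q} vanish for p ≥ 5, the spectral sequence collapses at the third page, and the only possibly nontrivial third-page terms are E^3_{0,0}, E^3_{1,0} and E^3_{0,1}; moreover E^2_{3,0} ≅ E^3_{3,0} ≅ im(d^2_{3,0}) forces E^2_{3,0} ≅ E^2_{1,1} via d^2, E^2_{4,0} ≅ E^2_{2,1}, and Ker(d^2_{2,0}) = 0. -/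
noncomputable section

/-- An (abstract) homological spectral sequence of `ℤ/2`-vector spaces: pages `E r p q`
indexed by `r : ℕ` and `p q : ℤ`, differentials recorded as maps `d r p q p' q'` between
arbitrary bidegrees which vanish unless `(p', q') = (p - r, q + r - 1)`, satisfying
`d ∘ d = 0`, and each page being the homology of the previous one. -/
structure SSData where
  E : ℕ → ℤ → ℤ → Type
  [grp : ∀ r p q, AddCommGroup (E r p q)]
  [mod : ∀ r p q, Module (ZMod 2) (E r p q)]
  d : ∀ (r : ℕ) (p q p' q' : ℤ), E r p q →ₗ[ZMod 2] E r p' q'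
  dstd : ∀ (r : ℕ) (p q p' q' : ℤ), ¬(p' = p - r ∧ q' = q + r - 1) → d r p q p' q' = 0
  dd : ∀ (r : ℕ) (p q p' q' p'' q'' : ℤ) (x : E r p q),
    d r p' q' p'' q'' (d r p q p' q' x) = 0
  page : ∀ (r : ℕ) (p q : ℤ), Nonempty (E (r + 1) p q ≃ₗ[ZMod 2]
    (LinearMap.ker (d r p q (p - r) (q + r - 1)) ⧸
      (Submodule.comap (LinearMap.ker (d r p q (p - r) (q + r - 1))).subtype
        (LinearMap.range (d r (p + r) (q - r + 1) p q)))))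

attribute [instance] SSData.grp SSData.mod

lemma lm_zero_left {R M N : Type*} [Semiring R] [AddCommMonoid M] [Module R M]
    [AddCommMonoid N] [Module R N] [Subsingleton M] (f : M →ₗ[R] N) : f = 0 := by
  ext x
  rw [Subsingleton.elim x 0, map_zero]
  rfl

lemma lm_zero_right {R M N : Type*} [Semiring R] [AddCommMonoid M] [Module R M]
    [AddCommMonoid N] [Module R N] [Subsingleton N] (f : M →ₗ[R] N) : f = 0 := by
  ext x
  exact Subsingleton.elim _ _

lemma SSData.subsingleton_succ (S : SSData) (r : ℕ) (p q : ℤ)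
    (h : Subsingleton (S.E r p q)) : Subsingleton (S.E (r + 1) p q) := by
  obtain ⟨e⟩ := S.page r p q
  haveI := h
  haveI : Subsingleton ↥(LinearMap.ker (S.d r p q (p - r) (q + r - 1))) :=
    ⟨fun a b => Subtype.ext (Subsingleton.elim _ _)⟩
  haveI : Subsingleton
      ((LinearMap.ker (S.d r p q (p - r) (q + r - 1))) ⧸
        (Submodule.comap (LinearMap.ker (S.d r p q (p - r) (q + r - 1))).subtype
          (LinearMap.range (S.d r (p + r) (q - r + 1) p q)))) :=
    (Submodule.mkQ_surjective _).subsingleton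
  exact e.toEquiv.subsingleton

lemma SSData.subsingleton_of_zero (S : SSData) (r : ℕ) (p q : ℤ)
    (h : Subsingleton (S.E 0 p q)) : Subsingleton (S.E r p q) := by
  induction r with
  | zero => exact h
  | succ n ih => exact S.subsingleton_succ n p q ih

lemma SSData.subsingleton_ge (S : SSData) (p q : ℤ) {r₀ r : ℕ} (hle : r₀ ≤ r)
    (h : Subsingleton (S.E r₀ p q)) : Subsingleton (S.E r p q) := by
  induction r, hle using Nat.le_induction with
  | base => exact h
  | succ n hn ih => exact S.subsingleton_succ n p q ih

lemma SSData.inj_aux (S : SSData) (p q a b c d' : ℤ)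
    (h3 : Subsingleton (S.E 3 p q))
    (e : S.E 3 p q ≃ₗ[ZMod 2]
      (LinearMap.ker (S.d 2 p q a b) ⧸
        (Submodule.comap (LinearMap.ker (S.d 2 p q a b)).subtype
          (LinearMap.range (S.d 2 c d' p q)))))
    (hin : S.d 2 c d' p q = 0) :
    Function.Injective (S.d 2 p q a b) := by
  haveI : Subsingleton
      ((LinearMap.ker (S.d 2 p q a b)) ⧸
        (Submodule.comap (LinearMap.ker (S.d 2 p q a b)).subtype
          (LinearMap.range (S.d 2 c d' p q)))) :=
    e.symm.toEquiv.subsingleton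
  rw [← LinearMap.ker_eq_bot, LinearMap.ker_eq_bot']
  intro m hm
  have h0 : Submodule.Quotient.mk (⟨m, hm⟩ : LinearMap.ker (S.d 2 p q a b)) =
      (0 : (LinearMap.ker (S.d 2 p q a b)) ⧸
        (Submodule.comap (LinearMap.ker (S.d 2 p q a b)).subtype
          (LinearMap.range (S.d 2 c d' p q)))) := Subsingleton.elim _ _
  have hmem := (Submodule.Quotient.mk_eq_zero _).mp h0
  rw [Submodule.mem_comap] at hmem
  rw [hin] at hmem
  obtain ⟨y, hy⟩ := hmem
  simpa using hy.symm

lemma SSData.surj_aux (S : SSData) (p q a b c d' : ℤ)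
    (h3 : Subsingleton (S.E 3 p q))
    (e : S.E 3 p q ≃ₗ[ZMod 2]
      (LinearMap.ker (S.d 2 p q a b) ⧸
        (Submodule.comap (LinearMap.ker (S.d 2 p q a b)).subtype
          (LinearMap.range (S.d 2 c d' p q)))))
    (hout : S.d 2 p q a b = 0) :
    Function.Surjective (S.d 2 c d' p q) := by
  haveI : Subsingleton
      ((LinearMap.ker (S.d 2 p q a b)) ⧸
        (Submodule.comap (LinearMap.ker (S.d 2 p q a b)).subtype
          (LinearMap.range (S.d 2 c d' p q)))) :=
    e.symm.toEquiv.subsingleton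
  intro y
  have hy : y ∈ LinearMap.ker (S.d 2 p q a b) := by
    rw [hout]; simp
  have h0 : Submodule.Quotient.mk (⟨y, hy⟩ : LinearMap.ker (S.d 2 p q a b)) =
      (0 : (LinearMap.ker (S.d 2 p q a b)) ⧸
        (Submodule.comap (LinearMap.ker (S.d 2 p q a b)).subtype
          (LinearMap.range (S.d 2 c d' p q)))) := Subsingleton.elim _ _
  have hmem := (Submodule.Quotient.mk_eq_zero _).mp h0
  rw [Submodule.mem_comap] at hmem
  exact hmem

lemma SSData.page' (S : SSData) (r : ℕ) (p q a b c d' : ℤ)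
    (ha : a = p - r) (hb : b = q + r - 1) (hc : c = p + r) (hd : d' = q - r + 1) :
    Nonempty (S.E (r + 1) p q ≃ₗ[ZMod 2]
      (LinearMap.ker (S.d r p q a b) ⧸
        (Submodule.comap (LinearMap.ker (S.d r p q a b)).subtype
          (LinearMap.range (S.d r c d' p q))))) := by
  subst ha hb hc hd
  exact S.page r p q

/-- Structure of the persistence Mayer–Vietoris spectral sequence of a 2-dimensional alpha
complex `A(X)` with grid cover `U` (stated levelwise at each filtration parameter).  The
hypotheses record the standing facts: the zero page is the double complex, which vanishes
for `q ≥ 3`, for `q ≥ 1 ∧ p + q ≥ 5` and outside the first quadrant; the vertical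
differential `d⁰_{p,2}` is injective (planarity: `PH_q = 0` for `q ≥ 2` on any filtered
subcomplex); a second-page differential vanishes as soon as the double-complex term
`C_{p-1,q+1}` it lifts through vanishes; and the stable (third) page consists of
subquotients of the abutment `H`, where `H_m ≅ PH_m(A(X)) = 0` for `m ≥ 2`.
Conclusions: `E¹_{p,q} = 0` for `q ≥ 2`; `d²_{p,q} = 0` for `p ≥ 5`; the spectral sequence
collapses at the third page (all differentials `d^r` with `r ≥ 3` vanish); the only
possibly nontrivial third-page terms are `E³_{0,0}`, `E³_{1,0}`, `E³_{0,1}`; and moreover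
`d² : E²_{3,0} → E²_{1,1}` and `d² : E²_{4,0} → E²_{2,1}` are isomorphisms while
`d² : E²_{2,0} → E²_{0,1}` has trivial kernel. -/
theorem mv_spectral_sequence_structure (S : SSData)
    (hE0 : ∀ p q : ℤ, (3 ≤ q ∨ (1 ≤ q ∧ 5 ≤ p + q) ∨ p < 0 ∨ q < 0) →
      Subsingleton (S.E 0 p q))
    (hinj : ∀ p : ℤ, Function.Injective (S.d 0 p 2 p 1))
    (hd2geom : ∀ p q p' q' : ℤ, Subsingleton (S.E 0 (p - 1) (q + 1)) →
      S.d 2 p q p' q' = 0)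
    (H : ℤ → Type) [∀ m, AddCommGroup (H m)] [∀ m, Module (ZMod 2) (H m)]
    (hH : ∀ m : ℤ, 2 ≤ m → Subsingleton (H m))
    (hconv : ∀ p q : ℤ, ∃ (W : Submodule (ZMod 2) (H (p + q)))
      (f : W →ₗ[ZMod 2] S.E 3 p q), Function.Surjective f) :
    (∀ p q : ℤ, 2 ≤ q → Subsingleton (S.E 1 p q)) ∧
    (∀ p q p' q' : ℤ, 5 ≤ p → S.d 2 p q p' q' = 0) ∧
    (∀ r : ℕ, 3 ≤ r → ∀ p q p' q' : ℤ, S.d r p q p' q' = 0) ∧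
    (∀ p q : ℤ, ¬((p = 0 ∧ q = 0) ∨ (p = 1 ∧ q = 0) ∨ (p = 0 ∧ q = 1)) →
      Subsingleton (S.E 3 p q)) ∧
    Function.Bijective (S.d 2 3 0 1 1) ∧
    Function.Bijective (S.d 2 4 0 2 1) ∧
    Function.Injective (S.d 2 2 0 0 1) := by
  -- Part 1 : E¹_{p,q} = 0 for q ≥ 2
  have part1 : ∀ p q : ℤ, 2 ≤ q → Subsingleton (S.E 1 p q) := by
    intro p q hq
    by_cases h3 : 3 ≤ q
    · exact S.subsingleton_succ 0 p q (hE0 p q (Or.inl h3))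
    · have hq2 : q = 2 := by omega
      subst hq2
      obtain ⟨e⟩ := S.page' 0 p 2 p 1 p 3 (by norm_num) (by norm_num)
        (by norm_num) (by norm_num)
      haveI : Subsingleton ↥(LinearMap.ker (S.d 0 p 2 p 1)) :=
        ⟨fun a b => Subtype.ext (hinj p ((LinearMap.mem_ker.mp a.2).trans
          (LinearMap.mem_ker.mp b.2).symm))⟩
      haveI : Subsingleton
          ((LinearMap.ker (S.d 0 p 2 p 1)) ⧸
            (Submodule.comap (LinearMap.ker (S.d 0 p 2 p 1)).subtype
              (LinearMap.range (S.d 0 p 3 p 2)))) :=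
        (Submodule.mkQ_surjective _).subsingleton
      exact e.toEquiv.subsingleton
  -- Part 2 : d²_{p,q} = 0 for p ≥ 5
  have part2 : ∀ p q p' q' : ℤ, 5 ≤ p → S.d 2 p q p' q' = 0 := by
    intro p q p' q' hp
    by_cases hstd : p' = p - ((2 : ℕ) : ℤ) ∧ q' = q + ((2 : ℕ) : ℤ) - 1
    · by_cases hq : 0 ≤ q
      · exact hd2geom p q p' q' (hE0 (p - 1) (q + 1) (by omega))
      · haveI : Subsingleton (S.E 2 p q) :=
          S.subsingleton_of_zero 2 p q (hE0 p q (by omega))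
        exact lm_zero_left _
    · exact S.dstd 2 p q p' q' hstd
  -- Part 4 (needed for part 3) : third page vanishing
  have part4 : ∀ p q : ℤ, ¬((p = 0 ∧ q = 0) ∨ (p = 1 ∧ q = 0) ∨ (p = 0 ∧ q = 1)) →
      Subsingleton (S.E 3 p q) := by
    intro p q hne
    by_cases hneg : p < 0 ∨ q < 0
    · exact S.subsingleton_of_zero 3 p q (hE0 p q (by omega))
    · obtain ⟨W, f, hf⟩ := hconv p q
      haveI : Subsingleton (H (p + q)) := hH (p + q) (by omega)
      haveI : Subsingleton W := ⟨fun a b => Subtype.ext (Subsingleton.elim _ _)⟩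
      exact hf.subsingleton
  -- Part 3 : collapse at the third page
  have part3 : ∀ r : ℕ, 3 ≤ r → ∀ p q p' q' : ℤ, S.d r p q p' q' = 0 := by
    intro r hr p q p' q'
    by_cases hstd : p' = p - (r : ℤ) ∧ q' = q + (r : ℤ) - 1
    · by_cases hset : (p = 0 ∧ q = 0) ∨ (p = 1 ∧ q = 0) ∨ (p = 0 ∧ q = 1)
      · have hr' : (3 : ℤ) ≤ (r : ℤ) := by exact_mod_cast hr
        haveI : Subsingleton (S.E r p' q') :=
          S.subsingleton_ge p' q' hr (part4 p' q' (by omega))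
        exact lm_zero_right _
      · haveI : Subsingleton (S.E r p q) :=
          S.subsingleton_ge p q hr (part4 p q hset)
        exact lm_zero_left _
    · exact S.dstd r p q p' q' hstd
  refine ⟨part1, part2, part3, part4, ?_, ?_, ?_⟩
  · -- d² : E²_{3,0} → E²_{1,1} bijective
    constructor
    · obtain ⟨e⟩ := S.page' 2 3 0 1 1 5 (-1) (by norm_num) (by norm_num)
        (by norm_num) (by norm_num)
      refine S.inj_aux 3 0 1 1 5 (-1) (part4 3 0 (by omega)) e ?_
      haveI : Subsingleton (S.E 2 5 (-1)) :=
        S.subsingleton_of_zero 2 5 (-1) (hE0 5 (-1) (by omega))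
      exact lm_zero_left _
    · obtain ⟨e⟩ := S.page' 2 1 1 (-1) 2 3 0 (by norm_num) (by norm_num)
        (by norm_num) (by norm_num)
      refine S.surj_aux 1 1 (-1) 2 3 0 (part4 1 1 (by omega)) e ?_
      haveI : Subsingleton (S.E 2 (-1) 2) :=
        S.subsingleton_of_zero 2 (-1) 2 (hE0 (-1) 2 (by omega))
      exact lm_zero_right _
  · -- d² : E²_{4,0} → E²_{2,1} bijective
    constructor
    · obtain ⟨e⟩ := S.page' 2 4 0 2 1 6 (-1) (by norm_num) (by norm_num)
        (by norm_num) (by norm_num)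
      refine S.inj_aux 4 0 2 1 6 (-1) (part4 4 0 (by omega)) e ?_
      haveI : Subsingleton (S.E 2 6 (-1)) :=
        S.subsingleton_of_zero 2 6 (-1) (hE0 6 (-1) (by omega))
      exact lm_zero_left _
    · obtain ⟨e⟩ := S.page' 2 2 1 0 2 4 0 (by norm_num) (by norm_num)
        (by norm_num) (by norm_num)
      refine S.surj_aux 2 1 0 2 4 0 (part4 2 1 (by omega)) e ?_
      haveI : Subsingleton (S.E 2 0 2) :=
        S.subsingleton_succ 1 0 2 (part1 0 2 (by omega))
      exact lm_zero_right _
  · -- d² : E²_{2,0} → E²_{0,1} injective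
    obtain ⟨e⟩ := S.page' 2 2 0 0 1 4 (-1) (by norm_num) (by norm_num)
      (by norm_num) (by norm_num)
    refine S.inj_aux 2 0 0 1 4 (-1) (part4 2 0 (by omega)) e ?_
    haveI : Subsingleton (S.E 2 4 (-1)) :=
      S.subsingleton_of_zero 2 4 (-1) (hE0 4 (-1) (by omega))
    exact lm_zero_left _
end
end

section
/- An edge e of a planar Delaunay triangulation D(X) is Gabriel if and only if, for each triangle of D(X) having e as a face, the vertex of that triangle opposite to e lies outside the open disc having e as a diameter. -/
noncomputable section

/-- `T` is a Delaunay triangulation of `X`: a triangulation of `X` all of whose triangles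
have empty open circumdiscs with respect to `X`. -/
structure IsDelaunay (X : Finset Pt) (T : Finset (Finset Pt)) : Prop where
  card : ∀ t ∈ T, t.card = 3
  verts : (⋃ t ∈ T, (t : Set Pt)) = (X : Set Pt)
  cover : (⋃ t ∈ T, convexHull ℝ (t : Set Pt)) = convexHull ℝ (X : Set Pt)
  inter : ∀ t ∈ T, ∀ t' ∈ T,
    convexHull ℝ (t : Set Pt) ∩ convexHull ℝ (t' : Set Pt)
      = convexHull ℝ ((t ∩ t' : Finset Pt) : Set Pt)
  delaunay : ∀ t ∈ T, ∀ (c : Pt) (r : ℝ), (∀ v ∈ t, dist v c = r) →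
    ∀ x ∈ X, dist x c < r → x ∈ t

lemma key_ident (y a o m : Pt) :
    dist y o ^ 2 - dist y m ^ 2 - (dist a o ^ 2 - dist a m ^ 2)
      = 2 * (inner ℝ (y - a) (m - o) : ℝ) := by
  simp only [dist_eq_norm, ← real_inner_self_eq_norm_sq, inner_sub_left, inner_sub_right,
    real_inner_comm]
  ring

lemma finset_three (t : Finset Pt) (h3 : t.card = 3) {a b : Pt} (ha : a ∈ t) (hb : b ∈ t)
    (hab : a ≠ b) : ∃ c, c ≠ a ∧ c ≠ b ∧ t = {a, b, c} := by
  have hsub : ({a, b} : Finset Pt) ⊆ t := by simp [Finset.insert_subset_iff, ha, hb]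
  have hcard : (t \ {a, b}).card = 1 := by
    rw [Finset.card_sdiff_of_subset hsub, h3]
    simp [Finset.card_insert_of_notMem, hab]
  obtain ⟨c, hc⟩ := Finset.card_eq_one.mp hcard
  have hcm : c ∈ t \ ({a, b} : Finset Pt) := by rw [hc]; exact Finset.mem_singleton_self c
  simp only [Finset.mem_sdiff, Finset.mem_insert, Finset.mem_singleton] at hcm
  refine ⟨c, fun h => hcm.2 (Or.inl h), fun h => hcm.2 (Or.inr h), ?_⟩
  have h2 := Finset.union_sdiff_of_subset hsub
  rw [hc] at h2
  rw [← h2]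
  ext z; simp [or_assoc]

lemma collinear_of_mid {a b q : Pt} (h : midpoint ℝ a b ∈ segment ℝ b q) :
    Collinear ℝ {a, b, q} := by
  obtain ⟨u, v, hu, hv, huv, heq⟩ := h
  have ha : a = AffineMap.lineMap b q (2 * v) := by
    have h2 : a = (2:ℝ) • (u • b + v • q) - b := by
      rw [heq, midpoint_eq_smul_add, invOf_eq_inv]
      module
    have hu' : u = 1 - v := by linarith
    rw [h2, hu']
    simp only [AffineMap.lineMap_apply, vsub_eq_sub, vadd_eq_add]
    module
  exact collinear_insert_of_mem_affineSpan_pair (ha ▸ AffineMap.lineMap_mem_affineSpan_pair _ _ _)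

/-- An edge `e = {a,b}` of a planar Delaunay triangulation `D(X)` is Gabriel (the open disc
having `e` as diameter contains no point of `X`) if and only if for every triangle of
`D(X)` having `e` as a face, the vertex opposite to `e` lies outside the open disc with
diameter `e`. -/
theorem gabriel_iff_opposite_vertices_outside
    (X : Finset Pt) (T : Finset (Finset Pt)) (hX : GenPos X) (hT : IsDelaunay X T)
    (a b : Pt) (hab : a ≠ b) (he : ∃ t ∈ T, ({a, b} : Finset Pt) ⊆ t) :
    (∀ x ∈ X, dist a b / 2 ≤ dist x (midpoint ℝ a b)) ↔
    (∀ t ∈ T, ({a, b} : Finset Pt) ⊆ t →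
      ∀ v ∈ t, v ∉ ({a, b} : Finset Pt) → dist a b / 2 ≤ dist v (midpoint ℝ a b)) := by
  have htsubX : ∀ t ∈ T, t ⊆ X := by
    intro t ht v hv
    have hmem : (v : Pt) ∈ (⋃ t ∈ T, (t : Set Pt)) := Set.mem_biUnion ht hv
    rw [hT.verts] at hmem
    exact_mod_cast hmem
  constructor
  · intro hL t ht _ v hv _
    exact hL v (htsubX t ht hv)
  · intro hR x hx
    by_contra hlt'
    push_neg at hlt'
    set m := midpoint ℝ a b with hm
    have hdam : dist a m = dist a b / 2 := by
      rw [hm, dist_left_midpoint]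
      norm_num
      ring
    have hdbm : dist b m = dist a b / 2 := by
      rw [hm, midpoint_comm, dist_left_midpoint, dist_comm b a]
      norm_num
      ring
    -- basic memberships
    obtain ⟨t₀, ht₀, hsub₀⟩ := he
    have ha₀ : a ∈ t₀ := hsub₀ (by simp)
    have hb₀ : b ∈ t₀ := hsub₀ (by simp)
    have haX : a ∈ X := htsubX t₀ ht₀ ha₀
    have hbX : b ∈ X := htsubX t₀ ht₀ hb₀
    -- the midpoint is not a point of X
    have hma : m ≠ a := fun h => hab ((midpoint_eq_left_iff (R := ℝ)).mp (hm ▸ h))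
    have hmb : m ≠ b := fun h => hab ((midpoint_eq_right_iff (R := ℝ)).mp (hm.symm.trans h))
    have hmX : m ∉ X := by
      intro hmem
      have hcol : Collinear ℝ ({m, a, b} : Set Pt) := by
        refine collinear_insert_of_mem_affineSpan_pair ?_
        rw [hm, ← lineMap_inv_two]
        exact AffineMap.lineMap_mem_affineSpan_pair _ _ _
      have hcard : ({m, a, b} : Finset Pt).card = 3 := by
        rw [Finset.card_insert_of_notMem (by simp [hma, hmb]),
          Finset.card_insert_of_notMem (by simp [hab]), Finset.card_singleton]
      have hss : ({m, a, b} : Finset Pt) ⊆ X := by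
        simp [Finset.insert_subset_iff, hmem, haX, hbX]
      exact hX.1 _ hss hcard (by simpa using hcol)
    -- hull facts
    have hmhull : m ∈ convexHull ℝ (X : Set Pt) :=
      segment_subset_convexHull haX hbX (hm ▸ midpoint_mem_segment a b)
    have hxhull : x ∈ convexHull ℝ (X : Set Pt) := subset_convexHull ℝ _ hx
    -- find a triangle containing m whose hull contains points towards x
    set B : Set (Finset Pt) := {t : Finset Pt | t ∈ T ∧ m ∉ convexHull ℝ (t : Set Pt)} with hB
    have hBfin : B.Finite := T.finite_toSet.subset (fun t h => h.1)
    set A : Set Pt := ⋃ t ∈ B, convexHull ℝ (t : Set Pt) with hA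
    have hAclosed : IsClosed A := by
      refine Set.Finite.isClosed_biUnion hBfin ?_
      intro t _
      exact (t.finite_toSet).isClosed_convexHull (𝕜 := ℝ)
    have hmA : m ∉ A := by
      intro hmem
      rw [hA] at hmem
      obtain ⟨t, ht, hmt⟩ := Set.mem_iUnion₂.mp hmem
      exact ht.2 hmt
    obtain ⟨δ, hδpos, hball⟩ := Metric.isOpen_iff.mp hAclosed.isOpen_compl m hmA
    set θ : ℝ := min 1 (δ / (dist x m + 1)) with hθ
    have hθpos : 0 < θ := by
      apply lt_min one_pos
      positivity
    have hθ1 : θ ≤ 1 := min_le_left _ _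
    set q : Pt := m + θ • (x - m) with hq
    have hqseg : q ∈ segment ℝ m x := by
      refine ⟨1 - θ, θ, by linarith, hθpos.le, by ring, ?_⟩
      rw [hq]; module
    have hqX : q ∈ convexHull ℝ (X : Set Pt) :=
      (convex_convexHull ℝ _).segment_subset hmhull hxhull hqseg
    rw [← hT.cover] at hqX
    obtain ⟨t, ht, hqt⟩ := Set.mem_iUnion₂.mp hqX
    have hdqm : dist q m = θ * dist x m := by
      rw [hq, dist_eq_norm]
      have : m + θ • (x - m) - m = θ • (x - m) := by module
      rw [this, norm_smul, Real.norm_eq_abs, abs_of_pos hθpos, ← dist_eq_norm]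
    have hqball : q ∈ Metric.ball m δ := by
      rw [Metric.mem_ball, hdqm]
      have h1 : θ ≤ δ / (dist x m + 1) := min_le_right _ _
      have h2 : δ / (dist x m + 1) * dist x m < δ := by
        rw [div_mul_eq_mul_div, div_lt_iff₀ (by positivity)]
        nlinarith [dist_nonneg (x := x) (y := m)]
      have h3 : (0:ℝ) ≤ dist x m := dist_nonneg
      nlinarith
    have hmt : m ∈ convexHull ℝ (t : Set Pt) := by
      by_contra hnm
      have : q ∈ A := Set.mem_biUnion (Set.mem_setOf_eq ▸ ⟨ht, hnm⟩ : t ∈ B) hqt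
      exact hball hqball this
    -- show a ∈ t and b ∈ t using the intersection property
    obtain ⟨c₀, hc₀a, hc₀b, ht₀eq⟩ := finset_three t₀ (hT.card t₀ ht₀) ha₀ hb₀ hab
    have hc₀X : c₀ ∈ X := htsubX t₀ ht₀ (by rw [ht₀eq]; simp)
    have hncol₀ : ¬ Collinear ℝ ({a, b, c₀} : Set Pt) := by
      have hcard : ({a, b, c₀} : Finset Pt).card = 3 := by
        rw [Finset.card_insert_of_notMem (by simp [hab, Ne.symm hc₀a]),
          Finset.card_insert_of_notMem (by simp [Ne.symm hc₀b]), Finset.card_singleton]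
      have hss : ({a, b, c₀} : Finset Pt) ⊆ X := by
        simp [Finset.insert_subset_iff, haX, hbX, hc₀X]
      have := hX.1 _ hss hcard
      simpa using this
    have hmt₀ : m ∈ convexHull ℝ (t₀ : Set Pt) := by
      refine segment_subset_convexHull ?_ ?_ (hm ▸ midpoint_mem_segment a b) <;>
        [exact ha₀; exact hb₀]
    have hminter : m ∈ convexHull ℝ ((t ∩ t₀ : Finset Pt) : Set Pt) := by
      rw [← hT.inter t ht t₀ ht₀]
      exact ⟨hmt, hmt₀⟩
    have haT : a ∈ t := by
      by_contra hna
      have hs : ((t ∩ t₀ : Finset Pt) : Set Pt) ⊆ ({b, c₀} : Set Pt) := by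
        intro z hz
        simp only [Finset.coe_inter, Set.mem_inter_iff, Finset.mem_coe] at hz
        have hz₀ : z ∈ t₀ := hz.2
        rw [ht₀eq] at hz₀
        simp only [Finset.mem_insert, Finset.mem_singleton] at hz₀
        rcases hz₀ with rfl | rfl | rfl
        · exact absurd hz.1 hna
        · exact Set.mem_insert _ _
        · exact Set.mem_insert_of_mem _ rfl
      have hmseg : m ∈ segment ℝ b c₀ := by
        rw [← convexHull_pair]
        exact convexHull_mono hs hminter
      exact hncol₀ (collinear_of_mid (hm ▸ hmseg))
    have hbT : b ∈ t := by
      by_contra hnb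
      have hs : ((t ∩ t₀ : Finset Pt) : Set Pt) ⊆ ({a, c₀} : Set Pt) := by
        intro z hz
        simp only [Finset.coe_inter, Set.mem_inter_iff, Finset.mem_coe] at hz
        have hz₀ : z ∈ t₀ := hz.2
        rw [ht₀eq] at hz₀
        simp only [Finset.mem_insert, Finset.mem_singleton] at hz₀
        rcases hz₀ with rfl | rfl | rfl
        · exact Set.mem_insert _ _
        · exact absurd hz.1 hnb
        · exact Set.mem_insert_of_mem _ rfl
      have hmseg : midpoint ℝ b a ∈ segment ℝ a c₀ := by
        rw [midpoint_comm, ← hm, ← convexHull_pair]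
        exact convexHull_mono hs hminter
      have hcol : Collinear ℝ ({b, a, c₀} : Set Pt) := collinear_of_mid hmseg
      rw [Set.insert_comm] at hcol
      exact hncol₀ hcol
    -- the third vertex of t
    obtain ⟨c, hca, hcb, hteq⟩ := finset_three t (hT.card t ht) haT hbT hab
    have hcT : c ∈ t := by rw [hteq]; simp
    have hcX : c ∈ X := htsubX t ht hcT
    have hRc : dist a b / 2 ≤ dist c m := by
      refine hR t ht (by simp [Finset.insert_subset_iff, haT, hbT]) c hcT ?_
      simp [hca, hcb]
    have hncol : ¬ Collinear ℝ ({a, b, c} : Set Pt) := by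
      have hcard : ({a, b, c} : Finset Pt).card = 3 := by
        rw [Finset.card_insert_of_notMem (by simp [hab, Ne.symm hca]),
          Finset.card_insert_of_notMem (by simp [Ne.symm hcb]), Finset.card_singleton]
      have hss : ({a, b, c} : Finset Pt) ⊆ X := by
        simp [Finset.insert_subset_iff, haX, hbX, hcX]
      have := hX.1 _ hss hcard
      simpa using this
    have hai : AffineIndependent ℝ ![a, b, c] :=
      affineIndependent_iff_not_collinear_set.mpr hncol
    set S : Affine.Simplex ℝ Pt 2 := ⟨![a, b, c], hai⟩ with hS
    set o : Pt := S.circumcenter with ho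
    set R : ℝ := S.circumradius with hoR
    have hda : dist a o = R := S.dist_circumcenter_eq_circumradius 0
    have hdb : dist b o = R := S.dist_circumcenter_eq_circumradius 1
    have hdc : dist c o = R := S.dist_circumcenter_eq_circumradius 2
    have hdists : ∀ v ∈ t, dist v o = R := by
      intro v hv
      rw [hteq] at hv
      simp only [Finset.mem_insert, Finset.mem_singleton] at hv
      rcases hv with rfl | rfl | rfl
      exacts [hda, hdb, hdc]
    -- x is not inside the circumdisc of t
    have hxa : x ≠ a := fun h => by rw [h, hdam] at hlt'; linarith
    have hxb : x ≠ b := fun h => by rw [h, hdbm] at hlt'; linarith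
    have hxc : x ≠ c := fun h => by rw [h] at hlt'; linarith
    have hxo : R ≤ dist x o := by
      by_contra h
      push_neg at h
      have hxt := hT.delaunay t ht o R hdists x hx h
      rw [hteq] at hxt
      simp only [Finset.mem_insert, Finset.mem_singleton] at hxt
      rcases hxt with rfl | rfl | rfl
      exacts [hxa rfl, hxb rfl, hxc rfl]
    -- inner ℝ product facts
    have hd2 : (0:ℝ) ≤ dist a b / 2 := by positivity
    have hb0 : (inner ℝ (b - a) (m - o) : ℝ) = 0 := by
      have hk := key_ident b a o m
      rw [hdb, hdbm, hda, hdam] at hk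
      linarith
    have hc0 : (inner ℝ (c - a) (m - o) : ℝ) ≤ 0 := by
      have hk := key_ident c a o m
      rw [hdc, hda, hdam] at hk
      have hsq : (dist a b / 2) ^ 2 ≤ dist c m ^ 2 := pow_le_pow_left₀ hd2 hRc 2
      linarith
    have hx0 : (0:ℝ) < inner ℝ (x - a) (m - o) := by
      have hk := key_ident x a o m
      rw [hda, hdam] at hk
      have hRnn : 0 ≤ R := hda ▸ dist_nonneg
      have hsq1 : R ^ 2 ≤ dist x o ^ 2 := pow_le_pow_left₀ hRnn hxo 2
      have hsq2 : dist x m ^ 2 < (dist a b / 2) ^ 2 :=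
        pow_lt_pow_left₀ hlt' dist_nonneg (by norm_num)
      linarith
    -- q is in the hull of t, hence in the half-space opposite to x
    have hhalf : convexHull ℝ (t : Set Pt) ⊆
        {y : Pt | (inner ℝ y (m - o) : ℝ) ≤ inner ℝ a (m - o)} := by
      refine convexHull_min ?_ (convex_halfSpace_le ⟨fun u v => inner_add_left u v _,
        fun r u => real_inner_smul_left u _ r⟩ _)
      intro z hz
      rw [hteq] at hz
      simp only [Finset.coe_insert, Finset.coe_singleton, Set.mem_insert_iff,
        Set.mem_singleton_iff] at hz
      simp only [Set.mem_setOf_eq]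
      have hble : (inner ℝ b (m - o) : ℝ) ≤ inner ℝ a (m - o) := by
        have := hb0; rw [inner_sub_left] at this; linarith
      have hcle : (inner ℝ c (m - o) : ℝ) ≤ inner ℝ a (m - o) := by
        have := hc0; rw [inner_sub_left] at this; linarith
      rcases hz with rfl | rfl | rfl
      · exact le_refl _
      · exact hble
      · exact hcle
    have hqle : (inner ℝ (q - a) (m - o) : ℝ) ≤ 0 := by
      have := hhalf hqt
      rw [Set.mem_setOf_eq] at this
      rw [inner_sub_left]
      linarith
    -- but q is strictly on the x side
    have hma2 : m - a = (2⁻¹ : ℝ) • (b - a) := by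
      rw [hm, midpoint_eq_smul_add, invOf_eq_inv]
      module
    have hmaw : (inner ℝ (m - a) (m - o) : ℝ) = 0 := by
      rw [hma2, real_inner_smul_left, hb0, mul_zero]
    have hqsplit : q - a = (m - a) + θ • ((x - a) - (m - a)) := by
      rw [hq]; module
    have hqgt : (0:ℝ) < inner ℝ (q - a) (m - o) := by
      rw [hqsplit, inner_add_left, real_inner_smul_left, hmaw, inner_sub_left, hmaw]
      have := mul_pos hθpos hx0
      linarith
    linarith
end
end
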